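/- arXiv:2106.06013 — 7 statements merged into one kernel-verified Lean document; each statement's English description precedes it below -/
import Mathlib

section
/- Let 0 < r < 1. For every constant 0 ≤ c < √2 there exists a bounded holomorphic function φ on the annulus A_r such that the kernel (λ,μ) ↦ (c²·(sup_{z∈A_r}|φ(z)|)² − φ(λ)·conj(φ(μ)))·k_{A_r}(λ,μ) is NOT positive semi-definite on A_r; that is, the constant √2 in the inequality ‖φ‖_{Mult(𝓗²(A_r))} ≤ √2·‖φ‖_∞ is best possible. -/
open Complex ComplexConjugate ContinuousLinearMap
open scoped ComplexOrder

noncomputable section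

/-- The open annulus `A_r = {z : r < |z| < 1}`. -/
def annulus (r : ℝ) : Set ℂ := {z : ℂ | r < ‖z‖ ∧ ‖z‖ < 1}

/-- The kernel `k_{A_r}(λ,μ) = (1-r²)/((1-λμ̄)(1-r²/(λμ̄)))`. -/
def kAnn (r : ℝ) (l m : ℂ) : ℂ :=
  (1 - (r : ℂ) ^ 2) / ((1 - l * conj m) * (1 - (r : ℂ) ^ 2 / (l * conj m)))

/-- A kernel `k` is positive semi-definite on a set `A`. -/
def IsPosSemidefOn {X : Type*} (A : Set X) (k : X → X → ℂ) : Prop :=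
  ∀ (n : ℕ) (x : Fin n → X), (∀ i, x i ∈ A) → ∀ w : Fin n → ℂ,
    0 ≤ ∑ i, ∑ j, k (x j) (x i) * w i * conj (w j)

/-- Integer powers of an operator `T` with given inverse `Tinv`:
`T^n` for `n ≥ 0` and `(T⁻¹)^{-n}` for `n < 0`. -/
def opZpow {H : Type*} [NormedAddCommGroup H] [NormedSpace ℂ H]
    (T Tinv : H →L[ℂ] H) (n : ℤ) : H →L[ℂ] H :=
  if 0 ≤ n then T ^ n.toNat else Tinv ^ (-n).toNat

/-- The operator inequality `r²·T⁻¹(T⁻¹)* + T·T* ≤ (r²+1)·I`. -/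
def opCond (r : ℝ) {H : Type*} [NormedAddCommGroup H] [InnerProductSpace ℂ H]
    [CompleteSpace H] (T Tinv : H →L[ℂ] H) : Prop :=
  (((r : ℂ) ^ 2 + 1) • (1 : H →L[ℂ] H)
    - ((r : ℂ) ^ 2 • (Tinv * ContinuousLinearMap.adjoint Tinv)
        + T * ContinuousLinearMap.adjoint T)).IsPositive

namespace SqrtTwoOptimalAux

open Finset

lemma geom_eval {M : ℕ} {ζ : ℂ} (hζ : IsPrimitiveRoot ζ M) (k : ℕ) :
    ∑ j ∈ Finset.range M, (ζ ^ j) ^ k = if M ∣ k then (M : ℂ) else 0 := by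
  have h1 : ∀ j, (ζ ^ j) ^ k = (ζ ^ k) ^ j := fun j => by
    rw [← pow_mul, mul_comm, pow_mul]
  simp only [h1]
  by_cases hdvd : M ∣ k
  · rw [if_pos hdvd]
    have h : ζ ^ k = 1 := by
      obtain ⟨d, rfl⟩ := hdvd
      rw [pow_mul, hζ.pow_eq_one, one_pow]
    simp [h]
  · rw [if_neg hdvd]
    have hne : ζ ^ k ≠ 1 := fun h => hdvd ((hζ.pow_eq_one_iff_dvd k).mp h)
    rw [geom_sum_eq hne]
    have h : (ζ ^ k) ^ M = 1 := by
      rw [← pow_mul, mul_comm, pow_mul, hζ.pow_eq_one, one_pow]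
    rw [h]; simp

def Gp (ζ : ℂ) (M q : ℕ) : ℂ := ∑ j ∈ Finset.range M, (ζ ^ j) ^ q

lemma Gp_eval {M : ℕ} {ζ : ℂ} (hζ : IsPrimitiveRoot ζ M) (q : ℕ) :
    Gp ζ M q = if M ∣ q then (M : ℂ) else 0 := geom_eval hζ q

lemma inv_expand {M : ℕ} {u R : ℂ} (hu : u ≠ 1) (huM : u ^ M = R) :
    (1 - R) * (1 - u)⁻¹ = ∑ m ∈ Finset.range M, u ^ m := by
  have h := geom_sum_mul u M
  have h1 : (1 : ℂ) - u ≠ 0 := fun h0 => hu (by linear_combination -h0)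
  field_simp
  linear_combination h + huM

lemma dvd_helper1 {n m : ℕ} (hn : 0 < n) (hm : m < 2*n) (h : 2*n ∣ n + m) : m = n := by
  obtain ⟨d, hd⟩ := h
  rcases Nat.lt_or_ge d 2 with h2 | h2
  · interval_cases d <;> omega
  · have : 2*n*2 ≤ 2*n*d := Nat.mul_le_mul_left _ h2
    omega

lemma dvd_helper2 {n m : ℕ} (hn : 0 < n) (hm : m < 2*n) (h : 2*n ∣ n + (m+1)) : m = n - 1 := by
  obtain ⟨d, hd⟩ := h
  rcases Nat.lt_or_ge d 2 with h2 | h2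
  · interval_cases d <;> omega
  · have : 2*n*2 ≤ 2*n*d := Nat.mul_le_mul_left _ h2
    omega

lemma kAnn_expand {r : ℝ} (hr0 : 0 < r) (hr1 : r < 1) {M : ℕ} {α β : ℂ}
    (hαM : α ^ M = 1) (hβM : β ^ M = 1) (hα : ‖α‖ = 1) (hβ : ‖β‖ = 1) :
    (1 - (r : ℂ) ^ M) * kAnn r ((Real.sqrt r : ℂ) * α) ((Real.sqrt r : ℂ) * β)
      = (∑ m ∈ Finset.range M, (r:ℂ) ^ m * α ^ m * β ^ (M - m))
        + ∑ m ∈ Finset.range M, (r:ℂ) ^ (m+1) * β ^ (m+1) * α ^ (M - 1 - m) := by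
  have hα0 : α ≠ 0 := fun h => by simp [h] at hα
  have hβ0 : β ≠ 0 := fun h => by simp [h] at hβ
  set a : ℂ := (r:ℂ) * α * β⁻¹ with ha
  set b : ℂ := (r:ℂ) * β * α⁻¹ with hb
  have haabs : ‖a‖ = r := by
    simp [ha, norm_mul, norm_inv, hα, hβ, Complex.norm_real, Real.norm_eq_abs, abs_of_pos hr0]
  have hbabs : ‖b‖ = r := by
    simp [hb, norm_mul, norm_inv, hα, hβ, Complex.norm_real, Real.norm_eq_abs, abs_of_pos hr0]
  have ha1 : a ≠ 1 := fun h => by rw [h] at haabs; simp at haabs; linarith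
  have hb1 : b ≠ 1 := fun h => by rw [h] at hbabs; simp at hbabs; linarith
  have ha0 : a ≠ 0 := by
    intro h; rw [h] at haabs; simp at haabs; linarith
  have hb0 : b ≠ 0 := by
    intro h; rw [h] at hbabs; simp at hbabs; linarith
  have hab : a * b = (r:ℂ)^2 := by rw [ha, hb]; field_simp
  have haM : a ^ M = (r:ℂ)^M := by
    simp [ha, mul_pow, inv_pow, hαM, hβM]
  have hbM : b ^ M = (r:ℂ)^M := by
    simp [hb, mul_pow, inv_pow, hαM, hβM]
  have hconjβ : conj β = β⁻¹ := by
    have h1 : β * conj β = 1 := by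
      rw [Complex.mul_conj]
      norm_cast
      rw [Complex.normSq_eq_norm_sq, hβ]; norm_num
    exact (inv_eq_of_mul_eq_one_right h1).symm
  have hlm : ((Real.sqrt r : ℂ) * α) * conj ((Real.sqrt r : ℂ) * β) = a := by
    rw [map_mul, Complex.conj_ofReal, hconjβ]
    have hss : ((Real.sqrt r : ℂ)) * ((Real.sqrt r : ℂ)) = (r:ℂ) := by
      rw [← Complex.ofReal_mul, Real.mul_self_sqrt hr0.le]
    calc (Real.sqrt r : ℂ) * α * ((Real.sqrt r : ℂ) * β⁻¹)
        = ((Real.sqrt r : ℂ) * (Real.sqrt r : ℂ)) * (α * β⁻¹) := by ring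
      _ = (r:ℂ) * (α * β⁻¹) := by rw [hss]
      _ = a := by rw [ha]; ring
  have hkAnn : kAnn r ((Real.sqrt r : ℂ) * α) ((Real.sqrt r : ℂ) * β)
      = (1-a)⁻¹ + b * (1-b)⁻¹ := by
    rw [kAnn, hlm, ← hab]
    have h1a : (1:ℂ) - a ≠ 0 := fun h0 => ha1 (by linear_combination -h0)
    have h1b : (1:ℂ) - b ≠ 0 := fun h0 => hb1 (by linear_combination -h0)
    field_simp
    ring
  rw [hkAnn, mul_add, inv_expand ha1 haM, ← mul_assoc, mul_comm (1 - (r:ℂ)^M) b,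
    mul_assoc, inv_expand hb1 hbM, Finset.mul_sum]
  congr 1
  · refine Finset.sum_congr rfl fun m hm => ?_
    have hmM : m < M := Finset.mem_range.mp hm
    have hβm : β ^ (M - m) * β ^ m = 1 := by
      rw [← pow_add, Nat.sub_add_cancel hmM.le, hβM]
    have h : a ^ m * β ^ m = (r:ℂ)^m * α ^ m := by
      rw [ha, mul_pow, mul_pow, inv_pow, mul_assoc]
      rw [inv_mul_cancel₀ (pow_ne_zero _ hβ0), mul_one]
    calc a ^ m = a ^ m * (β ^ (M-m) * β ^ m) := by rw [hβm, mul_one]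
      _ = (a ^ m * β ^ m) * β ^ (M-m) := by ring
      _ = (r:ℂ)^m * α^m * β^(M-m) := by rw [h]
  · refine Finset.sum_congr rfl fun m hm => ?_
    have hmM : m < M := Finset.mem_range.mp hm
    have hsub : M - 1 - m + (m+1) = M := by omega
    have hαm : α ^ (M - 1 - m) * α ^ (m+1) = 1 := by
      rw [← pow_add, hsub, hαM]
    have h : b ^ (m+1) * α ^ (m+1) = (r:ℂ)^(m+1) * β ^ (m+1) := by
      rw [hb, mul_pow, mul_pow, inv_pow, mul_assoc]
      rw [inv_mul_cancel₀ (pow_ne_zero _ hα0), mul_one]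
    calc b * b ^ m = b ^ (m+1) * (α ^ (M-1-m) * α ^ (m+1)) := by
          rw [hαm, mul_one, pow_succ]; ring
      _ = (b ^ (m+1) * α ^ (m+1)) * α ^ (M-1-m) := by ring
      _ = (r:ℂ)^(m+1) * β^(m+1) * α^(M-1-m) := by rw [h]

lemma fact3 (M : ℕ) (c : ℕ → ℂ) (f g : ℕ → ℕ → ℂ) :
    ∑ i ∈ Finset.range M, ∑ j ∈ Finset.range M, ∑ m ∈ Finset.range M, c m * f m j * g m i
      = ∑ m ∈ Finset.range M, c m * (∑ j ∈ Finset.range M, f m j) * (∑ i ∈ Finset.range M, g m i) := by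
  have h1 : ∀ i, ∑ j ∈ Finset.range M, ∑ m ∈ Finset.range M, c m * f m j * g m i
      = ∑ m ∈ Finset.range M, ∑ j ∈ Finset.range M, c m * f m j * g m i :=
    fun i => Finset.sum_comm
  simp only [h1]
  rw [Finset.sum_comm]
  refine Finset.sum_congr rfl fun m _ => ?_
  calc ∑ i ∈ Finset.range M, ∑ j ∈ Finset.range M, c m * f m j * g m i
      = ∑ i ∈ Finset.range M, (c m * ∑ j ∈ Finset.range M, f m j) * g m i := by
        refine Finset.sum_congr rfl fun i _ => ?_
        rw [Finset.mul_sum, Finset.sum_mul]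
    _ = (c m * ∑ j ∈ Finset.range M, f m j) * ∑ i ∈ Finset.range M, g m i := by
        rw [← Finset.mul_sum]

lemma main_sum (n : ℕ) {r : ℝ} (hr0 : 0 < r) (hr1 : r < 1) {ζ : ℂ}
    (hζM : ζ ^ (2*n) = 1) (hζabs : ‖ζ‖ = 1) (k : ℕ) :
    ∑ i ∈ Finset.range (2*n), ∑ j ∈ Finset.range (2*n),
      (ζ^i)^k * (ζ^j)^k *
        ((1 - (r:ℂ)^(2*n)) * kAnn r ((Real.sqrt r:ℂ) * ζ^j) ((Real.sqrt r:ℂ) * ζ^i))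
    = (∑ m ∈ Finset.range (2*n), (r:ℂ)^m * Gp ζ (2*n) (k+m) * Gp ζ (2*n) (k+(2*n-m)))
      + ∑ m ∈ Finset.range (2*n), (r:ℂ)^(m+1) * Gp ζ (2*n) (k+(2*n-1-m)) * Gp ζ (2*n) (k+(m+1)) := by
  set M := 2*n with hM
  have hpow : ∀ i : ℕ, (ζ ^ i) ^ M = 1 := fun i => by
    rw [← pow_mul, mul_comm, pow_mul, hζM, one_pow]
  have habs : ∀ i : ℕ, ‖ζ ^ i‖ = 1 := fun i => by
    rw [norm_pow, hζabs, one_pow]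
  have hstep : ∀ i ∈ Finset.range M, ∀ j ∈ Finset.range M,
      (ζ^i)^k * (ζ^j)^k *
        ((1 - (r:ℂ)^M) * kAnn r ((Real.sqrt r:ℂ) * ζ^j) ((Real.sqrt r:ℂ) * ζ^i))
      = (∑ m ∈ Finset.range M, (r:ℂ)^m * ((ζ^j))^(k+m) * ((ζ^i))^(k+(M-m)))
        + ∑ m ∈ Finset.range M, (r:ℂ)^(m+1) * ((ζ^j))^(k+(M-1-m)) * ((ζ^i))^(k+(m+1)) := by
    intro i _ j _
    rw [kAnn_expand hr0 hr1 (hpow j) (hpow i) (habs j) (habs i)]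
    rw [mul_add, Finset.mul_sum, Finset.mul_sum]
    congr 1
    · refine Finset.sum_congr rfl fun m _ => ?_
      rw [pow_add, pow_add]; ring
    · refine Finset.sum_congr rfl fun m _ => ?_
      rw [pow_add, pow_add]; ring
  calc ∑ i ∈ Finset.range M, ∑ j ∈ Finset.range M,
      (ζ^i)^k * (ζ^j)^k *
        ((1 - (r:ℂ)^M) * kAnn r ((Real.sqrt r:ℂ) * ζ^j) ((Real.sqrt r:ℂ) * ζ^i))
      = ∑ i ∈ Finset.range M, ∑ j ∈ Finset.range M,
        ((∑ m ∈ Finset.range M, (r:ℂ)^m * ((ζ^j))^(k+m) * ((ζ^i))^(k+(M-m)))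
          + ∑ m ∈ Finset.range M, (r:ℂ)^(m+1) * ((ζ^j))^(k+(M-1-m)) * ((ζ^i))^(k+(m+1))) := by
        refine Finset.sum_congr rfl fun i hi => Finset.sum_congr rfl fun j hj => hstep i hi j hj
    _ = (∑ i ∈ Finset.range M, ∑ j ∈ Finset.range M,
          ∑ m ∈ Finset.range M, (r:ℂ)^m * ((ζ^j))^(k+m) * ((ζ^i))^(k+(M-m)))
        + ∑ i ∈ Finset.range M, ∑ j ∈ Finset.range M,
          ∑ m ∈ Finset.range M, (r:ℂ)^(m+1) * ((ζ^j))^(k+(M-1-m)) * ((ζ^i))^(k+(m+1)) := by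
        rw [← Finset.sum_add_distrib]
        refine Finset.sum_congr rfl fun i _ => ?_
        rw [← Finset.sum_add_distrib]
    _ = _ := by
        rw [fact3 M (fun m => (r:ℂ)^m) (fun m j => ((ζ^j))^(k+m)) (fun m i => ((ζ^i))^(k+(M-m))),
          fact3 M (fun m => (r:ℂ)^(m+1)) (fun m j => ((ζ^j))^(k+(M-1-m))) (fun m i => ((ζ^i))^(k+(m+1)))]
        rfl

lemma eval_An {n : ℕ} (hn : 0 < n) {ζ : ℂ} (hζ : IsPrimitiveRoot ζ (2*n)) (r : ℂ) :
    ∑ m ∈ Finset.range (2*n), r^m * Gp ζ (2*n) (n+m) * Gp ζ (2*n) (n+(2*n-m))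
      = r^n * (2*n:ℕ)^2 := by
  rw [Finset.sum_eq_single_of_mem n (Finset.mem_range.mpr (by omega))]
  · rw [show n + (2*n - n) = 2*n by omega, show n + n = 2*n by omega,
      Gp_eval hζ, if_pos (dvd_refl (2*n))]
    ring
  · intro m hm hne
    rw [Gp_eval hζ, if_neg fun h => hne (dvd_helper1 hn (Finset.mem_range.mp hm) h)]
    ring

lemma eval_Bn {n : ℕ} (hn : 0 < n) {ζ : ℂ} (hζ : IsPrimitiveRoot ζ (2*n)) (r : ℂ) :
    ∑ m ∈ Finset.range (2*n), r^(m+1) * Gp ζ (2*n) (n+(2*n-1-m)) * Gp ζ (2*n) (n+(m+1))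
      = r^n * (2*n:ℕ)^2 := by
  rw [Finset.sum_eq_single_of_mem (n-1) (Finset.mem_range.mpr (by omega))]
  · rw [show n - 1 + 1 = n by omega, show 2*n-1-(n-1) = n by omega,
      show n + n = 2*n by omega, Gp_eval hζ, if_pos (dvd_refl (2*n))]
    ring
  · intro m hm hne
    rw [Gp_eval hζ (n+(m+1)),
      if_neg fun h => hne (dvd_helper2 hn (Finset.mem_range.mp hm) h)]
    ring

lemma eval_A0 {n : ℕ} (hn : 0 < n) {ζ : ℂ} (hζ : IsPrimitiveRoot ζ (2*n)) (r : ℂ) :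
    ∑ m ∈ Finset.range (2*n), r^m * Gp ζ (2*n) (0+m) * Gp ζ (2*n) (0+(2*n-m))
      = (2*n:ℕ)^2 := by
  rw [Finset.sum_eq_single_of_mem 0 (Finset.mem_range.mpr (by omega))]
  · rw [show 0 + (2*n - 0) = 2*n by omega, show 0 + 0 = 0 by omega,
      Gp_eval hζ, Gp_eval hζ, if_pos (dvd_zero (2*n)), if_pos (dvd_refl (2*n))]
    ring
  · intro m hm hne
    have hmlt := Finset.mem_range.mp hm
    rw [Gp_eval hζ (0+m), if_neg (by
      intro h
      have h' : 2*n ∣ m := by simpa using h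
      exact hne (Nat.eq_zero_of_dvd_of_lt h' hmlt))]
    ring

lemma eval_B0 {n : ℕ} (hn : 0 < n) {ζ : ℂ} (hζ : IsPrimitiveRoot ζ (2*n)) (r : ℂ) :
    ∑ m ∈ Finset.range (2*n), r^(m+1) * Gp ζ (2*n) (0+(2*n-1-m)) * Gp ζ (2*n) (0+(m+1))
      = r^(2*n) * (2*n:ℕ)^2 := by
  rw [Finset.sum_eq_single_of_mem (2*n-1) (Finset.mem_range.mpr (by omega))]
  · rw [show 2*n-1+1 = 2*n by omega, show 2*n-1-(2*n-1) = 0 by omega,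
      show 0 + 0 = 0 by omega, show (0 + 2*n : ℕ) = 2*n by omega,
      Gp_eval hζ, Gp_eval hζ, if_pos (dvd_zero (2*n)), if_pos (dvd_refl (2*n))]
    ring
  · intro m hm hne
    have hmlt := Finset.mem_range.mp hm
    rw [Gp_eval hζ (0+(m+1)), if_neg (by
      intro h
      have h1 : 0 + (m+1) < 2*n := by omega
      have := Nat.eq_zero_of_dvd_of_lt h h1
      omega)]
    ring

lemma zeta_facts (n : ℕ) (hn : 0 < n) :
    IsPrimitiveRoot (Complex.exp (Real.pi * Complex.I / n)) (2*n) ∧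
    (Complex.exp (Real.pi * Complex.I / n)) ^ n = -1 ∧
    ‖Complex.exp (Real.pi * Complex.I / n)‖ = 1 := by
  have hn0 : (n:ℂ) ≠ 0 := Nat.cast_ne_zero.mpr hn.ne'
  have key : (2 * Real.pi * Complex.I / (2*n : ℕ) : ℂ) = Real.pi * Complex.I / n := by
    push_cast
    field_simp
  refine ⟨?_, ?_, ?_⟩
  · have h := Complex.isPrimitiveRoot_exp (2*n) (by omega)
    rwa [key] at h
  · rw [← Complex.exp_nat_mul]
    rw [show (n:ℂ) * (Real.pi * Complex.I / n) = Real.pi * Complex.I by field_simp]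
    exact Complex.exp_pi_mul_I
  · rw [Complex.norm_exp]
    have h : (Real.pi * Complex.I / n : ℂ).re = 0 := by
      simp [Complex.div_re, Complex.mul_re]
    rw [h, Real.exp_zero]

end SqrtTwoOptimalAux

open SqrtTwoOptimalAux Finset

set_option maxHeartbeats 1600000 in
/-- The constant `√2` in `‖φ‖_{Mult(𝓗²(A_r))} ≤ √2 ‖φ‖_∞` is best possible: for every
`0 ≤ c < √2` there is a bounded holomorphic `φ` on `A_r` for which the kernel
`(c²‖φ‖_∞² - φ(λ)φ(μ)*)k_{A_r}` is not positive semi-definite. -/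
theorem sqrt_two_is_optimal (r : ℝ) (hr0 : 0 < r) (hr1 : r < 1)
    (c : ℝ) (hc0 : 0 ≤ c) (hc : c < Real.sqrt 2) :
    ∃ φ : ℂ → ℂ, DifferentiableOn ℂ φ (annulus r) ∧
      BddAbove ((fun z => ‖φ z‖) '' annulus r) ∧
      ¬ IsPosSemidefOn (annulus r)
        (fun l m =>
          (((c ^ 2 * (sSup ((fun z => ‖φ z‖) '' annulus r)) ^ 2 : ℝ) : ℂ)
            - φ l * conj (φ m)) * kAnn r l m) := by
  -- basic inequalities
  have hc2 : c ^ 2 < 2 := by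
    have h2 : Real.sqrt 2 * Real.sqrt 2 = 2 := Real.mul_self_sqrt (by norm_num)
    nlinarith
  obtain ⟨n, hn, hrn⟩ : ∃ n : ℕ, 0 < n ∧ r ^ n < (2 - c^2)/8 := by
    have h := tendsto_pow_atTop_nhds_zero_of_lt_one hr0.le hr1
    have hε : 0 < (2 - c^2)/8 := by linarith
    obtain ⟨N, hN⟩ := Filter.eventually_atTop.mp (h.eventually (gt_mem_nhds hε))
    exact ⟨N+1, Nat.succ_pos N, hN (N+1) (by omega)⟩
  have hs0 : 0 < r^n := pow_pos hr0 n
  have hs1 : r^n ≤ 1 := pow_le_one₀ hr0.le hr1.le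
  have h2n : r^(2*n) = (r^n)*(r^n) := by rw [show 2*n = n + n by ring, pow_add]
  have hkey : c^2 * (1 + r^n) ^ 2 < 2 * (1 + r^(2*n)) := by
    rw [h2n]
    nlinarith [sq_nonneg c, mul_nonneg (sq_nonneg c) hs0.le, mul_pos hs0 hs0]
  -- the function φ
  set φ : ℂ → ℂ := fun z => z ^ n + (r:ℂ)^n * (z ^ n)⁻¹ with hφdef
  have hnne : n ≠ 0 := hn.ne'
  -- sup bound
  have hbound : ∀ z ∈ annulus r, ‖φ z‖ ≤ 1 + r^n := by
    intro z hz
    obtain ⟨hz1, hz2⟩ := hz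
    have hu0 : 0 < ‖z‖ := lt_trans hr0 hz1
    have hun : r^n < (‖z‖)^n := pow_lt_pow_left₀ hz1 hr0.le hnne
    have hu1 : (‖z‖)^n < 1 := pow_lt_one₀ (norm_nonneg z) hz2 hnne
    have hup : 0 < (‖z‖)^n := lt_trans hs0 hun
    have habs : ‖φ z‖ ≤ (‖z‖)^n + r^n * ((‖z‖)^n)⁻¹ := by
      refine le_trans (norm_add_le _ _) ?_
      rw [norm_pow, norm_mul, norm_inv, norm_pow, norm_pow, Complex.norm_real,
        Real.norm_eq_abs, abs_of_pos hr0]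
    refine le_trans habs ?_
    rw [← mul_le_mul_iff_of_pos_right hup]
    have hexp : ((‖z‖)^n + r^n * ((‖z‖)^n)⁻¹) * (‖z‖)^n
        = (‖z‖)^n * (‖z‖)^n + r^n := by
      field_simp
    rw [hexp]
    nlinarith [mul_nonneg (sub_nonneg.mpr hu1.le) (sub_nonneg.mpr hun.le)]
  have hBdd : BddAbove ((fun z => ‖φ z‖) '' annulus r) := by
    refine ⟨1 + r^n, fun y hy => ?_⟩
    obtain ⟨z, hz, rfl⟩ := hy
    exact hbound z hz
  refine ⟨φ, ?_, hBdd, ?_⟩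
  · -- differentiability
    intro z hz
    have hz0 : z ≠ 0 := by
      intro h
      rw [h] at hz
      obtain ⟨h1, _⟩ := hz
      simp at h1
      linarith
    have hzn : z ^ n ≠ 0 := pow_ne_zero _ hz0
    have hd1 : DifferentiableAt ℂ (fun w : ℂ => w ^ n) z := differentiableAt_pow n
    have hd2 : DifferentiableAt ℂ (fun w : ℂ => (w ^ n)⁻¹) z := hd1.inv hzn
    exact ((hd1.add (hd2.const_mul _)).differentiableWithinAt)
  -- the main negation
  intro hPSD
  set Sup : ℝ := sSup ((fun z => ‖φ z‖) '' annulus r) with hSupdef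
  have hSup_le : Sup ≤ 1 + r^n := by
    refine Real.sSup_le (fun y hy => ?_) (by positivity)
    obtain ⟨z, hz, rfl⟩ := hy
    exact hbound z hz
  have hSup0 : 0 ≤ Sup := by
    apply Real.sSup_nonneg
    rintro y ⟨z, _, rfl⟩
    exact norm_nonneg _
  have hE : c^2 * Sup^2 < 2 * (1 + r^(2*n)) := by
    refine lt_of_le_of_lt ?_ hkey
    have h1 : Sup^2 ≤ (1 + r^n)^2 := by nlinarith
    nlinarith [sq_nonneg c]
  -- roots of unity setup
  obtain ⟨hζprim, hζn, hζabs⟩ := zeta_facts n hn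
  set ζ : ℂ := Complex.exp (Real.pi * Complex.I / n) with hζdef
  have hζM : ζ ^ (2*n) = 1 := hζprim.pow_eq_one
  have hsqrtr_pos : 0 < Real.sqrt r := Real.sqrt_pos.mpr hr0
  have hsqrt1 : Real.sqrt r < 1 := by
    rw [show (1:ℝ) = Real.sqrt 1 by simp]
    exact Real.sqrt_lt_sqrt hr0.le hr1
  have hrsqrt : r < Real.sqrt r := by
    nlinarith [Real.mul_self_sqrt hr0.le]
  have hmem : ∀ j : Fin (2*n), (Real.sqrt r : ℂ) * ζ ^ (j:ℕ) ∈ annulus r := by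
    intro j
    have habs : ‖(Real.sqrt r : ℂ) * ζ ^ (j:ℕ)‖ = Real.sqrt r := by
      rw [norm_mul, norm_pow, hζabs, one_pow, mul_one, Complex.norm_real,
        Real.norm_eq_abs, abs_of_pos hsqrtr_pos]
    exact ⟨by rw [habs]; exact hrsqrt, by rw [habs]; exact hsqrt1⟩
  have hS := hPSD (2*n) (fun j => (Real.sqrt r : ℂ) * ζ ^ (j:ℕ)) hmem
    (fun j => (-1:ℂ) ^ (j:ℕ))
  -- notation
  set E : ℂ := ((c ^ 2 * Sup ^ 2 : ℝ) : ℂ) with hEdef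
  -- pointwise facts
  have hsig : ∀ k : ℕ, (ζ^k)^n = (-1:ℂ)^k := fun k => by
    rw [← pow_mul, mul_comm, pow_mul, hζn]
  have hconj : ∀ k : ℕ, conj ((-1:ℂ)^k) = (-1:ℂ)^k := fun k => by simp
  have hsig2 : ∀ i j : ℕ, ((ζ^i)^n * (ζ^j)^n) * ((ζ^i)^n * (ζ^j)^n) = 1 := by
    intro i j
    rw [hsig, hsig]
    rw [show ((-1:ℂ)^i * (-1)^j) * ((-1)^i * (-1)^j) = ((-1)^i*(-1)^i)*((-1)^j*(-1)^j) by ring,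
      ← mul_pow, ← mul_pow]
    norm_num
  have htr : ((Real.sqrt r : ℂ))^n * ((Real.sqrt r : ℂ))^n = (r:ℂ)^n := by
    rw [← mul_pow, ← Complex.ofReal_mul, Real.mul_self_sqrt hr0.le]
  have htne : ((Real.sqrt r : ℂ))^n ≠ 0 :=
    pow_ne_zero _ (Complex.ofReal_ne_zero.mpr hsqrtr_pos.ne')
  have hφx : ∀ k : ℕ, φ ((Real.sqrt r : ℂ) * ζ^k) = 2 * ((Real.sqrt r : ℂ))^n * (-1:ℂ)^k := by
    intro k
    have hm1 : ((-1:ℂ)^k) * ((-1:ℂ)^k) = 1 := by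
      rw [← mul_pow]; norm_num
    have hm1ne : ((-1:ℂ)^k) ≠ 0 := by
      intro h
      rw [h, mul_zero] at hm1
      exact zero_ne_one hm1
    show ((Real.sqrt r : ℂ) * ζ^k) ^ n + (r:ℂ)^n * (((Real.sqrt r : ℂ) * ζ^k) ^ n)⁻¹
        = 2 * ((Real.sqrt r : ℂ))^n * (-1:ℂ)^k
    rw [mul_pow, hsig k]
    rw [mul_inv, ← htr]
    have hinv : ((-1:ℂ)^k)⁻¹ = (-1:ℂ)^k := inv_eq_of_mul_eq_one_right hm1
    have htinv : ((Real.sqrt r:ℂ))^n * (((Real.sqrt r:ℂ))^n)⁻¹ = 1 := mul_inv_cancel₀ htne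
    rw [hinv]
    linear_combination (((Real.sqrt r:ℂ))^n * (-1:ℂ)^k) * htinv
  have hφprod : ∀ i j : ℕ,
      φ ((Real.sqrt r : ℂ) * ζ^j) * conj (φ ((Real.sqrt r : ℂ) * ζ^i))
        = (4*(r:ℂ)^n) * ((ζ^i)^n * (ζ^j)^n) := by
    intro i j
    have hcr : conj (2 * ((Real.sqrt r : ℂ))^n * (-1:ℂ)^i) = 2 * ((Real.sqrt r : ℂ))^n * (-1:ℂ)^i := by
      rw [map_mul, map_mul, map_pow, map_pow, Complex.conj_ofReal, map_neg, map_one,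
        map_ofNat]
    rw [hφx, hφx, hcr, hsig i, hsig j]
    linear_combination (4*(-1:ℂ)^i*(-1:ℂ)^j) * htr
  -- pointwise identity for the summand
  have hpt : ∀ i j : ℕ,
      (1 - (r:ℂ)^(2*n)) *
        ((E - φ ((Real.sqrt r : ℂ) * ζ^j) * conj (φ ((Real.sqrt r : ℂ) * ζ^i)))
          * kAnn r ((Real.sqrt r : ℂ) * ζ^j) ((Real.sqrt r : ℂ) * ζ^i)
          * (-1:ℂ)^i * conj ((-1:ℂ)^j))
      = E * ((ζ^i)^n * (ζ^j)^n *
          ((1 - (r:ℂ)^(2*n)) * kAnn r ((Real.sqrt r : ℂ) * ζ^j) ((Real.sqrt r : ℂ) * ζ^i)))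
        - (4*(r:ℂ)^n) *
          ((1 - (r:ℂ)^(2*n)) * kAnn r ((Real.sqrt r : ℂ) * ζ^j) ((Real.sqrt r : ℂ) * ζ^i)) := by
    intro i j
    rw [hφprod i j, hconj j, ← hsig i, ← hsig j]
    linear_combination (-(4*(r:ℂ)^n) * (1 - (r:ℂ)^(2*n))
      * kAnn r ((Real.sqrt r : ℂ) * ζ^j) ((Real.sqrt r : ℂ) * ζ^i)) * hsig2 i j
  -- convert Fin-sums to range-sums
  have hconv : ∀ g : ℕ → ℕ → ℂ,
      (∑ i : Fin (2*n), ∑ j : Fin (2*n), g (j:ℕ) (i:ℕ))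
        = ∑ i ∈ Finset.range (2*n), ∑ j ∈ Finset.range (2*n), g j i := by
    intro g
    rw [Fin.sum_univ_eq_sum_range (fun i => ∑ j : Fin (2*n), g (j:ℕ) i) (2*n)]
    exact Finset.sum_congr rfl fun i _ => Fin.sum_univ_eq_sum_range (fun j => g j i) (2*n)
  have hS' : (0:ℂ) ≤ ∑ i ∈ Finset.range (2*n), ∑ j ∈ Finset.range (2*n),
      (E - φ ((Real.sqrt r : ℂ) * ζ^j) * conj (φ ((Real.sqrt r : ℂ) * ζ^i)))
        * kAnn r ((Real.sqrt r : ℂ) * ζ^j) ((Real.sqrt r : ℂ) * ζ^i)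
        * (-1:ℂ)^i * conj ((-1:ℂ)^j) :=
    le_of_le_of_eq hS (hconv (fun j i =>
      (E - φ ((Real.sqrt r : ℂ) * ζ^j) * conj (φ ((Real.sqrt r : ℂ) * ζ^i)))
        * kAnn r ((Real.sqrt r : ℂ) * ζ^j) ((Real.sqrt r : ℂ) * ζ^i)
        * (-1:ℂ)^i * conj ((-1:ℂ)^j)))
  -- evaluate the sum in closed form
  have hcomp : (1 - (r:ℂ)^(2*n)) * (∑ i ∈ Finset.range (2*n), ∑ j ∈ Finset.range (2*n),
      (E - φ ((Real.sqrt r : ℂ) * ζ^j) * conj (φ ((Real.sqrt r : ℂ) * ζ^i)))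
        * kAnn r ((Real.sqrt r : ℂ) * ζ^j) ((Real.sqrt r : ℂ) * ζ^i)
        * (-1:ℂ)^i * conj ((-1:ℂ)^j))
      = E * (2 * (r:ℂ)^n * ((2*n:ℕ):ℂ)^2)
        - (4*(r:ℂ)^n) * (((2*n:ℕ):ℂ)^2 * (1 + (r:ℂ)^(2*n))) := by
    rw [Finset.mul_sum]
    calc ∑ i ∈ Finset.range (2*n), (1 - (r:ℂ)^(2*n)) * ∑ j ∈ Finset.range (2*n),
          (E - φ ((Real.sqrt r : ℂ) * ζ^j) * conj (φ ((Real.sqrt r : ℂ) * ζ^i)))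
            * kAnn r ((Real.sqrt r : ℂ) * ζ^j) ((Real.sqrt r : ℂ) * ζ^i)
            * (-1:ℂ)^i * conj ((-1:ℂ)^j)
        = ∑ i ∈ Finset.range (2*n), ∑ j ∈ Finset.range (2*n),
          (E * ((ζ^i)^n * (ζ^j)^n *
            ((1 - (r:ℂ)^(2*n)) * kAnn r ((Real.sqrt r : ℂ) * ζ^j) ((Real.sqrt r : ℂ) * ζ^i)))
          - (4*(r:ℂ)^n) *
            ((1 - (r:ℂ)^(2*n)) * kAnn r ((Real.sqrt r : ℂ) * ζ^j) ((Real.sqrt r : ℂ) * ζ^i))) := by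
          refine Finset.sum_congr rfl fun i _ => ?_
          rw [Finset.mul_sum]
          exact Finset.sum_congr rfl fun j _ => hpt i j
      _ = (∑ i ∈ Finset.range (2*n), ∑ j ∈ Finset.range (2*n),
            E * ((ζ^i)^n * (ζ^j)^n *
              ((1 - (r:ℂ)^(2*n)) * kAnn r ((Real.sqrt r : ℂ) * ζ^j) ((Real.sqrt r : ℂ) * ζ^i))))
          - ∑ i ∈ Finset.range (2*n), ∑ j ∈ Finset.range (2*n),
            (4*(r:ℂ)^n) *
              ((1 - (r:ℂ)^(2*n)) * kAnn r ((Real.sqrt r : ℂ) * ζ^j) ((Real.sqrt r : ℂ) * ζ^i)) := by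
          rw [← Finset.sum_sub_distrib]
          refine Finset.sum_congr rfl fun i _ => ?_
          rw [← Finset.sum_sub_distrib]
      _ = E * (∑ i ∈ Finset.range (2*n), ∑ j ∈ Finset.range (2*n),
            (ζ^i)^n * (ζ^j)^n *
              ((1 - (r:ℂ)^(2*n)) * kAnn r ((Real.sqrt r : ℂ) * ζ^j) ((Real.sqrt r : ℂ) * ζ^i)))
          - (4*(r:ℂ)^n) * (∑ i ∈ Finset.range (2*n), ∑ j ∈ Finset.range (2*n),
            (ζ^i)^0 * (ζ^j)^0 *
              ((1 - (r:ℂ)^(2*n)) * kAnn r ((Real.sqrt r : ℂ) * ζ^j) ((Real.sqrt r : ℂ) * ζ^i))) := by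
          congr 1
          · rw [Finset.mul_sum]
            refine Finset.sum_congr rfl fun i _ => ?_
            rw [Finset.mul_sum]
          · rw [Finset.mul_sum]
            refine Finset.sum_congr rfl fun i _ => ?_
            rw [Finset.mul_sum]
            refine Finset.sum_congr rfl fun j _ => ?_
            rw [pow_zero, pow_zero, one_mul, one_mul]
      _ = E * (2 * (r:ℂ)^n * ((2*n:ℕ):ℂ)^2)
          - (4*(r:ℂ)^n) * (((2*n:ℕ):ℂ)^2 * (1 + (r:ℂ)^(2*n))) := by
          rw [main_sum n hr0 hr1 hζM hζabs n, main_sum n hr0 hr1 hζM hζabs 0,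
            eval_An hn hζprim, eval_Bn hn hζprim, eval_A0 hn hζprim, eval_B0 hn hζprim]
          ring
  -- numeric contradiction
  have hQ1 : r^(2*n) < 1 := by
    rw [h2n]; nlinarith
  have hRe : (0:ℝ) ≤ (∑ i ∈ Finset.range (2*n), ∑ j ∈ Finset.range (2*n),
      (E - φ ((Real.sqrt r : ℂ) * ζ^j) * conj (φ ((Real.sqrt r : ℂ) * ζ^i)))
        * kAnn r ((Real.sqrt r : ℂ) * ζ^j) ((Real.sqrt r : ℂ) * ζ^i)
        * (-1:ℂ)^i * conj ((-1:ℂ)^j)).re := by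
    have h0 := (Complex.le_def.mp hS').1
    simpa only [Complex.zero_re] using h0
  have hcast : (1 - (r:ℂ)^(2*n)) = ((1 - r^(2*n) : ℝ) : ℂ) := by push_cast; ring
  have hvre : ((1 - r^(2*n) : ℝ)) * (∑ i ∈ Finset.range (2*n), ∑ j ∈ Finset.range (2*n),
      (E - φ ((Real.sqrt r : ℂ) * ζ^j) * conj (φ ((Real.sqrt r : ℂ) * ζ^i)))
        * kAnn r ((Real.sqrt r : ℂ) * ζ^j) ((Real.sqrt r : ℂ) * ζ^i)
        * (-1:ℂ)^i * conj ((-1:ℂ)^j)).re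
      = (c ^ 2 * Sup ^ 2) * (2 * r^n * ((2*n:ℕ):ℝ)^2)
        - (4*r^n) * (((2*n:ℕ):ℝ)^2 * (1 + r^(2*n))) := by
    have h1 := congrArg Complex.re hcomp
    rw [hcast] at h1
    rw [Complex.mul_re, Complex.ofReal_re, Complex.ofReal_im, zero_mul, sub_zero] at h1
    rw [h1, hEdef]
    norm_cast
  have hM2 : (0:ℝ) < ((2*n:ℕ):ℝ)^2 := by
    have : (0:ℝ) < ((2*n:ℕ):ℝ) := by
      exact_mod_cast Nat.pos_of_ne_zero (by omega)
    positivity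
  have hvneg : (c ^ 2 * Sup ^ 2) * (2 * r^n * ((2*n:ℕ):ℝ)^2)
      - (4*r^n) * (((2*n:ℕ):ℝ)^2 * (1 + r^(2*n))) < 0 := by
    nlinarith [mul_pos (mul_pos hs0 hM2) (sub_pos.mpr hE)]
  nlinarith [mul_nonneg (by linarith : (0:ℝ) ≤ 1 - r^(2*n)) hRe]

end
end

section
/- Let 0 < r < 1 and for an integer n ≥ 1 define g_n(z) = r^n/z^n + z^n on the annulus A_r. Then sup_{z ∈ A_r} |g_n(z)| = 1 + r^n. -/
open Complex ComplexConjugate ContinuousLinearMap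
open scoped ComplexOrder

noncomputable section

/-- For `g_n(z) = rⁿ/zⁿ + zⁿ` on the annulus `A_r`, `sup_{z ∈ A_r} |g_n(z)| = 1 + rⁿ`. -/
theorem sup_abs_g_eq (r : ℝ) (hr0 : 0 < r) (hr1 : r < 1) (n : ℕ) (hn : 1 ≤ n) :
    sSup ((fun z : ℂ => ‖(r : ℂ) ^ n / z ^ n + z ^ n‖) '' annulus r)
      = 1 + r ^ n := by
  have hrn0 : (0:ℝ) < r ^ n := pow_pos hr0 n
  have hmem : ∀ t : ℝ, r < t → t < 1 → ((t : ℂ) ∈ annulus r) := by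
    intro t ht1 ht2
    constructor
    · simpa [Complex.norm_real, Real.norm_eq_abs, abs_of_pos (hr0.trans ht1)] using ht1
    · simpa [Complex.norm_real, Real.norm_eq_abs, abs_of_pos (hr0.trans ht1)] using ht2
  have hval : ∀ t : ℝ, 0 < t →
      ‖(r : ℂ) ^ n / (t:ℂ) ^ n + (t:ℂ) ^ n‖ = r ^ n / t ^ n + t ^ n := by
    intro t ht
    have htn : (0:ℝ) < t ^ n := pow_pos ht n
    have h : ((r : ℂ) ^ n / (t:ℂ) ^ n + (t:ℂ) ^ n) = ((r ^ n / t ^ n + t ^ n : ℝ) : ℂ) := by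
      push_cast; ring
    rw [h, Complex.norm_real, Real.norm_eq_abs, abs_of_pos (by positivity)]
  apply IsLUB.csSup_eq
  · constructor
    · rintro x ⟨z, ⟨hz1, hz2⟩, rfl⟩
      simp only
      have hz0 : (0:ℝ) < ‖z‖ := hr0.trans hz1
      set s : ℝ := ‖z‖ ^ n with hs
      have hs0 : 0 < s := pow_pos hz0 n
      have hs1 : s < 1 := pow_lt_one₀ hz0.le hz2 (by omega)
      have hslb : r ^ n ≤ s := pow_le_pow_left₀ hr0.le hz1.le n
      have habs : ‖(r : ℂ) ^ n / z ^ n + z ^ n‖ ≤ r ^ n / s + s := by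
        refine le_trans (norm_add_le _ _) ?_
        rw [norm_div, norm_pow, norm_pow, Complex.norm_real, Real.norm_eq_abs, abs_of_pos hr0]
      refine habs.trans ?_
      rw [div_add' _ _ _ hs0.ne', div_le_iff₀ hs0]
      nlinarith
    · intro b hb
      have key : Filter.Tendsto (fun t : ℝ => r ^ n / t ^ n + t ^ n)
          (nhdsWithin 1 (Set.Ioo r 1)) (nhds (1 + r ^ n)) := by
        have hc : ContinuousAt (fun t : ℝ => r ^ n / t ^ n + t ^ n) 1 := by
          apply ContinuousAt.add
          · exact (continuousAt_const.div (continuousAt_pow 1 n) (by simp))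
          · exact continuousAt_pow 1 n
        have h2 := hc.continuousWithinAt (s := Set.Ioo r 1)
        have h1 : r ^ n / (1:ℝ) ^ n + (1:ℝ) ^ n = 1 + r ^ n := by
          simp; ring
        rw [ContinuousWithinAt, h1] at h2
        exact h2
      have hne : (nhdsWithin (1:ℝ) (Set.Ioo r 1)).NeBot := right_nhdsWithin_Ioo_neBot hr1
      refine le_of_tendsto key ?_
      filter_upwards [self_mem_nhdsWithin] with t ht
      have hel := hb ⟨(t:ℂ), hmem t ht.1 ht.2, rfl⟩
      rw [← hval t (hr0.trans ht.1)]
      exact hel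
  · exact ⟨‖(r : ℂ) ^ n / ((((r+1)/2 :ℝ)):ℂ) ^ n + ((((r+1)/2:ℝ)):ℂ) ^ n‖,
      ⟨(((r+1)/2 : ℝ) : ℂ), hmem _ (by linarith) (by linarith), rfl⟩⟩

end
end

section
/- Let 0 < r < 1 and let U : A_r × A_r → ℂ be a positive semi-definite hereditary function on the annulus A_r, i.e. the map (λ,μ) ↦ U(λ, conj(μ)) is holomorphic on A_r × A_r (as an open subset of ℂ²) and U is a positive semi-definite kernel on A_r. Then there exists a sequence (f_n)_{n∈ℕ} of holomorphic functions on A_r such that U(λ,μ) = ∑_{n=1}^∞ f_n(λ)·conj(f_n(μ)) for all λ, μ ∈ A_r, the series converging uniformly on compact subsets of A_r × A_r. -/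
open Complex ComplexConjugate ContinuousLinearMap
open scoped ComplexOrder

noncomputable section

namespace HPSDaux

variable (U : ℂ → ℂ → ℂ)

/-- Sesquilinear form attached to the kernel `U`:
`S a b = ∑ conj (a j) * b i * U j i`, conjugate-linear in `a`, linear in `b`. -/
def S (a b : ℂ →₀ ℂ) : ℂ :=
  ∑ i ∈ b.support, ∑ j ∈ a.support, U j i * b i * conj (a j)

lemma S_eq_sum (a b : ℂ →₀ ℂ) {s t : Finset ℂ} (hs : a.support ⊆ s) (ht : b.support ⊆ t) :
    S U a b = ∑ i ∈ t, ∑ j ∈ s, U j i * b i * conj (a j) := by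
  unfold S
  rw [Finset.sum_subset ht]
  · refine Finset.sum_congr rfl fun i _ => ?_
    refine Finset.sum_subset hs fun j _ hj => ?_
    simp [Finsupp.notMem_support_iff.mp hj]
  · intro i _ hi
    simp [Finsupp.notMem_support_iff.mp hi]

lemma S_add_left (a a' b : ℂ →₀ ℂ) : S U (a + a') b = S U a b + S U a' b := by
  rw [S_eq_sum U (a+a') b (s := a.support ∪ a'.support) (t := b.support)
      (Finsupp.support_add) (subset_rfl),
    S_eq_sum U a b (s := a.support ∪ a'.support) (t := b.support)
      (Finset.subset_union_left) (subset_rfl),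
    S_eq_sum U a' b (s := a.support ∪ a'.support) (t := b.support)
      (Finset.subset_union_right) (subset_rfl), ← Finset.sum_add_distrib]
  refine Finset.sum_congr rfl fun i _ => ?_
  rw [← Finset.sum_add_distrib]
  refine Finset.sum_congr rfl fun j _ => ?_
  simp only [Finsupp.add_apply, map_add]
  ring

lemma S_add_right (a b b' : ℂ →₀ ℂ) : S U a (b + b') = S U a b + S U a b' := by
  rw [S_eq_sum U a (b+b') (s := a.support) (t := b.support ∪ b'.support)
      subset_rfl (Finsupp.support_add),
    S_eq_sum U a b (s := a.support) (t := b.support ∪ b'.support)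
      subset_rfl (Finset.subset_union_left),
    S_eq_sum U a b' (s := a.support) (t := b.support ∪ b'.support)
      subset_rfl (Finset.subset_union_right), ← Finset.sum_add_distrib]
  refine Finset.sum_congr rfl fun i _ => ?_
  rw [← Finset.sum_add_distrib]
  refine Finset.sum_congr rfl fun j _ => ?_
  simp only [Finsupp.add_apply]
  ring

lemma S_smul_left (c : ℂ) (a b : ℂ →₀ ℂ) : S U (c • a) b = conj c * S U a b := by
  rw [S_eq_sum U (c • a) b (s := a.support) (t := b.support)
      (Finsupp.support_smul) subset_rfl, S, Finset.mul_sum]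
  refine Finset.sum_congr rfl fun i _ => ?_
  rw [Finset.mul_sum]
  refine Finset.sum_congr rfl fun j _ => ?_
  simp only [Finsupp.smul_apply, smul_eq_mul, map_mul]
  ring

lemma S_smul_right (c : ℂ) (a b : ℂ →₀ ℂ) : S U a (c • b) = c * S U a b := by
  rw [S_eq_sum U a (c • b) (s := a.support) (t := b.support)
      subset_rfl (Finsupp.support_smul), S, Finset.mul_sum]
  refine Finset.sum_congr rfl fun i _ => ?_
  rw [Finset.mul_sum]
  refine Finset.sum_congr rfl fun j _ => ?_
  simp only [Finsupp.smul_apply, smul_eq_mul]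
  ring

lemma S_zero_left (b : ℂ →₀ ℂ) : S U 0 b = 0 := by simp [S]

lemma S_zero_right (a : ℂ →₀ ℂ) : S U a 0 = 0 := by simp [S]

lemma S_neg_left (a b : ℂ →₀ ℂ) : S U (-a) b = - S U a b := by
  have := S_smul_left U (-1) a b
  simpa using this

lemma S_neg_right (a b : ℂ →₀ ℂ) : S U a (-b) = - S U a b := by
  have := S_smul_right U (-1) a b
  simpa using this

lemma S_sub_left (a a' b : ℂ →₀ ℂ) : S U (a - a') b = S U a b - S U a' b := by
  rw [sub_eq_add_neg, S_add_left, S_neg_left, sub_eq_add_neg]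

lemma S_sub_right (a b b' : ℂ →₀ ℂ) : S U a (b - b') = S U a b - S U a b' := by
  rw [sub_eq_add_neg, S_add_right, S_neg_right, sub_eq_add_neg]

lemma S_sum_left {ι : Type*} (s : Finset ι) (g : ι → (ℂ →₀ ℂ)) (b : ℂ →₀ ℂ) :
    S U (∑ i ∈ s, g i) b = ∑ i ∈ s, S U (g i) b := by
  classical
  induction s using Finset.induction_on with
  | empty => simp [S_zero_left]
  | @insert a' s' h ih => simp [Finset.sum_insert h, S_add_left, ih]

lemma S_sum_right {ι : Type*} (s : Finset ι) (a : ℂ →₀ ℂ) (g : ι → (ℂ →₀ ℂ)) :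
    S U a (∑ i ∈ s, g i) = ∑ i ∈ s, S U a (g i) := by
  classical
  induction s using Finset.induction_on with
  | empty => simp [S_zero_right]
  | @insert a' s' h ih => simp [Finset.sum_insert h, S_add_right, ih]

lemma S_single_single (x y : ℂ) : S U (Finsupp.single x 1) (Finsupp.single y 1) = U x y := by
  rw [S_eq_sum U _ _ (s := {x}) (t := {y}) Finsupp.support_single_subset
    Finsupp.support_single_subset]
  simp

lemma S_single_left (l : ℂ) (b : ℂ →₀ ℂ) :
    S U (Finsupp.single l 1) b = ∑ i ∈ b.support, b i * U l i := by
  rw [S_eq_sum U _ b (s := {l}) (t := b.support) Finsupp.support_single_subset subset_rfl]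
  refine Finset.sum_congr rfl fun i _ => ?_
  simp; ring


variable {A : Set ℂ}


variable {U : ℂ → ℂ → ℂ} {A : Set ℂ}

lemma hermitian_of_psd (hpsd : IsPosSemidefOn A U) :
    ∀ x ∈ A, ∀ y ∈ A, U y x = conj (U x y) := by
  intro x hx y hy
  have hmem : ∀ i : Fin 2, (![x, y]) i ∈ A := by
    intro i; fin_cases i <;> simpa
  have h1 := hpsd 2 ![x, y] hmem ![1, 1]
  have h2 := hpsd 2 ![x, y] hmem ![1, Complex.I]
  have hx1 := hpsd 1 ![x] (by intro i; fin_cases i; simpa) ![1]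
  have hy1 := hpsd 1 ![y] (by intro i; fin_cases i; simpa) ![1]
  simp [Fin.sum_univ_two, Fin.sum_univ_one] at h1 h2 hx1 hy1
  rw [Complex.le_def] at h1 h2 hx1 hy1
  have i1 : (U x x + U y x + (U x y + U y y)).im = 0 := by
    simpa using h1.2.symm
  have i2 : (U x x + U y x * Complex.I⁻¹ + (U x y * Complex.I + U y y)).im = 0 := by
    simpa using h2.2.symm
  have ixx : (U x x).im = 0 := by simpa using hx1.2.symm
  have iyy : (U y y).im = 0 := by simpa using hy1.2.symm
  have hIinv : Complex.I⁻¹ = -Complex.I := by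
    simp [Complex.inv_I]
  rw [hIinv] at i2
  apply Complex.ext
  · simp only [Complex.add_im, Complex.mul_im, Complex.neg_re, Complex.neg_im,
      Complex.I_re, Complex.I_im, Complex.mul_re] at i1 i2 ⊢
    simp only [Complex.conj_re]
    nlinarith [i1, i2, ixx, iyy]
  · simp only [Complex.add_im, Complex.mul_im, Complex.neg_re, Complex.neg_im,
      Complex.I_re, Complex.I_im, Complex.mul_re] at i1 i2 ⊢
    simp only [Complex.conj_im]
    nlinarith [i1, i2, ixx, iyy]

lemma psd_finset (hpsd : IsPosSemidefOn A U) (s : Finset ℂ) (hs : ↑s ⊆ A) (w : ℂ → ℂ) :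
    0 ≤ ∑ i ∈ s, ∑ j ∈ s, U j i * w i * conj (w j) := by
  classical
  set n := s.card with hn
  set e : {z // z ∈ s} ≃ Fin n := s.equivFin with he
  set x : Fin n → ℂ := fun i => ((e.symm i : {z // z ∈ s}) : ℂ) with hxdef
  have hx : ∀ i, x i ∈ A := fun i => hs (e.symm i).2
  have key := hpsd n x hx (fun i => w (x i))
  have h1 : ∀ G : ℂ → ℂ, ∑ i : Fin n, G (x i) = ∑ i ∈ s, G i := by
    intro G
    rw [← Finset.sum_coe_sort s G]
    exact Equiv.sum_comp e.symm (fun i : {z // z ∈ s} => G (i : ℂ))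
  calc (0:ℂ) ≤ ∑ i, ∑ j, U (x j) (x i) * w (x i) * conj (w (x j)) := key
    _ = ∑ i ∈ s, ∑ j ∈ s, U j i * w i * conj (w j) := by
        rw [h1 (fun z => ∑ j : Fin n, U (x j) z * w z * conj (w (x j)))]
        refine Finset.sum_congr rfl fun i _ => ?_
        exact h1 (fun z => U z i * w i * conj (w z))


lemma S_self_nonneg (hpsd : IsPosSemidefOn A U) {a : ℂ →₀ ℂ} (ha : ↑a.support ⊆ A) :
    0 ≤ S U a a :=
  psd_finset hpsd a.support ha a

lemma S_self_re_nonneg (hpsd : IsPosSemidefOn A U) {a : ℂ →₀ ℂ} (ha : ↑a.support ⊆ A) :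
    0 ≤ (S U a a).re :=
  (Complex.le_def.mp (S_self_nonneg hpsd ha)).1

lemma S_self_im_zero (hpsd : IsPosSemidefOn A U) {a : ℂ →₀ ℂ} (ha : ↑a.support ⊆ A) :
    (S U a a).im = 0 :=
  ((Complex.le_def.mp (S_self_nonneg hpsd ha)).2).symm

lemma S_self_eq_re (hpsd : IsPosSemidefOn A U) {a : ℂ →₀ ℂ} (ha : ↑a.support ⊆ A) :
    S U a a = ((S U a a).re : ℂ) := by
  apply Complex.ext <;> simp [S_self_im_zero hpsd ha]

lemma S_conj (hpsd : IsPosSemidefOn A U) {a b : ℂ →₀ ℂ}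
    (ha : ↑a.support ⊆ A) (hb : ↑b.support ⊆ A) :
    conj (S U a b) = S U b a := by
  have hherm := hermitian_of_psd hpsd
  unfold S
  rw [map_sum]
  have step : ∀ i ∈ b.support,
      conj (∑ j ∈ a.support, U j i * b i * conj (a j))
        = ∑ j ∈ a.support, U i j * a j * conj (b i) := by
    intro i hi
    rw [map_sum]
    refine Finset.sum_congr rfl fun j hj => ?_
    have : U i j = conj (U j i) := hherm j (ha hj) i (hb hi)
    rw [this]
    simp only [map_mul, Complex.conj_conj]
    ring
  rw [Finset.sum_congr rfl step, Finset.sum_comm]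

/-- Expansion of `S (a + c•b) (a + c•b)`. -/
lemma S_expand (hpsd : IsPosSemidefOn A U) {a b : ℂ →₀ ℂ} (c : ℂ)
    (ha : ↑a.support ⊆ A) (hb : ↑b.support ⊆ A) :
    S U (a + c • b) (a + c • b)
      = S U a a + c * S U a b + conj c * conj (S U a b) + (conj c * c) * S U b b := by
  rw [S_add_left, S_add_right, S_add_right, S_smul_left, S_smul_left, S_smul_right,
    S_smul_right, S_conj hpsd ha hb]
  ring

/-- Cauchy–Schwarz for the form `S`. -/
lemma S_cauchy_schwarz (hpsd : IsPosSemidefOn A U) {a b : ℂ →₀ ℂ}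
    (ha : ↑a.support ⊆ A) (hb : ↑b.support ⊆ A) :
    Complex.normSq (S U a b) ≤ (S U a a).re * (S U b b).re := by
  set z := S U a b with hz
  set α := (S U a a).re with hα
  set β := (S U b b).re with hβ
  have hα0 : 0 ≤ α := S_self_re_nonneg hpsd ha
  have hβ0 : 0 ≤ β := S_self_re_nonneg hpsd hb
  have key : ∀ t : ℝ, 0 ≤ α - 2 * t * Complex.normSq z + t^2 * Complex.normSq z * β := by
    intro t
    have habc : ↑(a + (-(t:ℂ) * conj z) • b).support ⊆ A := by
      intro x hx
      have hx' : x ∈ a.support ∪ ((-(t:ℂ) * conj z) • b).support :=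
        Finsupp.support_add (Finset.mem_coe.mp hx)
      rcases Finset.mem_union.mp hx' with h | h
      · exact ha h
      · exact hb (Finsupp.support_smul h)
    have h0 := S_self_re_nonneg hpsd habc
    rw [S_expand hpsd (-(t:ℂ) * conj z) ha hb] at h0
    have hzz : (z * conj z) = (Complex.normSq z : ℂ) := by
      rw [Complex.mul_conj]
    have e1 : S U a a + (-(t:ℂ) * conj z) * z + conj (-(t:ℂ) * conj z) * conj z
        + (conj (-(t:ℂ) * conj z) * (-(t:ℂ) * conj z)) * S U b b
        = S U a a - 2*(t:ℂ) * (Complex.normSq z : ℂ)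
          + (t:ℂ)^2 * (Complex.normSq z : ℂ) * S U b b := by
      simp only [map_mul, map_neg, Complex.conj_conj, Complex.conj_ofReal]
      rw [← hzz]
      ring
    rw [e1] at h0
    have e2 : S U a a - 2*(t:ℂ) * (Complex.normSq z : ℂ)
        + (t:ℂ)^2 * (Complex.normSq z : ℂ) * S U b b
        = S U a a - ((2 * t * Complex.normSq z : ℝ) : ℂ)
          + ((t^2 * Complex.normSq z : ℝ) : ℂ) * S U b b := by
      push_cast; ring
    rw [e2] at h0
    simp only [Complex.sub_re, Complex.add_re, Complex.ofReal_re,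
      Complex.re_ofReal_mul] at h0
    linarith [h0]
  rcases eq_or_lt_of_le (Complex.normSq_nonneg z) with hz0 | hz0
  · rw [← hz0]; positivity
  · rcases eq_or_lt_of_le hβ0 with hb0 | hb0
    · exfalso
      have := key ((α + 1) / (2 * Complex.normSq z))
      rw [← hb0] at this
      have h2 : (α + 1) / (2 * Complex.normSq z) * Complex.normSq z = (α+1)/2 := by
        field_simp
      nlinarith [this]
    · have hkey := key (1 / β)
      have hβne : β ≠ 0 := ne_of_gt hb0
      have e : α - 2*(1/β)*Complex.normSq z + (1/β)^2*Complex.normSq z*β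
          = α - Complex.normSq z/β := by
        field_simp
        ring
      rw [e] at hkey
      have h5 : Complex.normSq z / β ≤ α := by linarith
      calc Complex.normSq z = Complex.normSq z / β * β := by field_simp
        _ ≤ α * β := mul_le_mul_of_nonneg_right h5 hβ0

/-- Non-normalized `n`-th Gram–Schmidt vector (depends on earlier normalized ones). -/
def gs (U : ℂ → ℂ → ℂ) (μ : ℕ → ℂ) : ℕ → (ℂ →₀ ℂ)
  | n =>
    let d := Finsupp.single (μ n) 1 -
      ∑ m ∈ (Finset.range n).attach,
        S U (gs U μ m.1) (Finsupp.single (μ n) 1) • gs U μ m.1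
    ((Real.sqrt ((S U d d).re))⁻¹ : ℂ) • d
  termination_by n => n
  decreasing_by exact Finset.mem_range.mp m.2

def gsd (U : ℂ → ℂ → ℂ) (μ : ℕ → ℂ) (n : ℕ) : ℂ →₀ ℂ :=
  Finsupp.single (μ n) 1 -
    ∑ m ∈ Finset.range n, S U (gs U μ m) (Finsupp.single (μ n) 1) • gs U μ m

lemma gs_eq (U : ℂ → ℂ → ℂ) (μ : ℕ → ℂ) (n : ℕ) :
    gs U μ n = ((Real.sqrt ((S U (gsd U μ n) (gsd U μ n)).re))⁻¹ : ℂ) • gsd U μ n := by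
  rw [gs]
  have h : (∑ m ∈ (Finset.range n).attach,
      S U (gs U μ m.1) (Finsupp.single (μ n) 1) • gs U μ m.1)
      = ∑ m ∈ Finset.range n, S U (gs U μ m) (Finsupp.single (μ n) 1) • gs U μ m :=
    Finset.sum_attach (Finset.range n)
      (fun m => S U (gs U μ m) (Finsupp.single (μ n) 1) • gs U μ m)
  rw [h]
  rfl

variable {μ : ℕ → ℂ}

lemma gs_supported (hμ : ∀ k, μ k ∈ A) (n : ℕ) : ↑(gs U μ n).support ⊆ A := by
  induction n using Nat.strong_induction_on with
  | _ n ih =>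
    rw [gs_eq]
    have hmem : gsd U μ n ∈ Finsupp.supported ℂ ℂ A := by
      refine Submodule.sub_mem _ (Finsupp.single_mem_supported ℂ 1 (hμ n))
        (Submodule.sum_mem _ fun m hm => Submodule.smul_mem _ _ ?_)
      exact (Finsupp.mem_supported ℂ _).mpr (ih m (Finset.mem_range.mp hm))
    exact (Finsupp.mem_supported ℂ _).mp
      (Submodule.smul_mem _ _ hmem)

lemma gsd_supported (hμ : ∀ k, μ k ∈ A) (n : ℕ) : ↑(gsd U μ n).support ⊆ A := by
  refine (Finsupp.mem_supported ℂ _).mp ?_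
  refine Submodule.sub_mem _ (Finsupp.single_mem_supported ℂ 1 (hμ n))
    (Submodule.sum_mem _ fun m hm => Submodule.smul_mem _ _ ?_)
  exact (Finsupp.mem_supported ℂ _).mpr (gs_supported hμ m)

lemma gs_norm (hpsd : IsPosSemidefOn A U) (hμ : ∀ k, μ k ∈ A) (n : ℕ) :
    S U (gs U μ n) (gs U μ n) = 1 ∨ gs U μ n = 0 := by
  set d := gsd U μ n with hd
  set t := (S U d d).re with ht
  have ht0 : 0 ≤ t := S_self_re_nonneg hpsd (gsd_supported hμ n)
  rcases eq_or_lt_of_le ht0 with h0 | hpos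
  · right
    rw [gs_eq, ← hd, ← ht, ← h0]
    simp
  · left
    have hSdd : S U d d = (t:ℂ) := by rw [ht]; exact S_self_eq_re hpsd (gsd_supported hμ n)
    rw [gs_eq U μ n, ← hd, S_smul_left, S_smul_right, hSdd]
    simp only [Complex.ofReal_re]
    have hconj : (starRingEnd ℂ) (((Real.sqrt t : ℝ) : ℂ))⁻¹ = (((Real.sqrt t : ℝ) : ℂ))⁻¹ := by
      rw [map_inv₀, Complex.conj_ofReal]
    rw [hconj]
    norm_cast
    have hs : Real.sqrt t * Real.sqrt t = t := Real.mul_self_sqrt ht0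
    have hne : Real.sqrt t ≠ 0 := ne_of_gt (Real.sqrt_pos.mpr hpos)
    field_simp
    rw [Real.sq_sqrt ht0]

lemma gs_orth (hpsd : IsPosSemidefOn A U) (hμ : ∀ k, μ k ∈ A) :
    ∀ n m, m < n → S U (gs U μ m) (gs U μ n) = 0 := by
  intro n
  induction n using Nat.strong_induction_on with
  | _ n ih =>
    intro m hmn
    rw [gs_eq U μ n, S_smul_right]
    suffices h : S U (gs U μ m) (gsd U μ n) = 0 by rw [h, mul_zero]
    rcases gs_norm hpsd hμ m with hnorm | hzero
    · unfold gsd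
      rw [S_sub_right, S_sum_right]
      have hterm : ∀ m' ∈ Finset.range n, m' ≠ m →
          S U (gs U μ m) (S U (gs U μ m') (Finsupp.single (μ n) 1) • gs U μ m') = 0 := by
        intro m' hm' hne
        rw [S_smul_right]
        rcases lt_or_gt_of_ne hne with h1 | h2
        · -- m' < m
          have := ih m hmn m' h1
          have hc : S U (gs U μ m) (gs U μ m') = 0 := by
            rw [← S_conj hpsd (gs_supported hμ m') (gs_supported hμ m), this, map_zero]
          rw [hc, mul_zero]
        · -- m < m'
          rw [ih m' (Finset.mem_range.mp hm') m h2, mul_zero]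
      rw [Finset.sum_eq_single_of_mem m (Finset.mem_range.mpr hmn) hterm,
        S_smul_right, hnorm, mul_one, sub_self]
    · rw [hzero, S_zero_left]

lemma gs_orth' (hpsd : IsPosSemidefOn A U) (hμ : ∀ k, μ k ∈ A) :
    ∀ n m, m ≠ n → S U (gs U μ m) (gs U μ n) = 0 := by
  intro n m hne
  rcases lt_or_gt_of_ne hne with h | h
  · exact gs_orth hpsd hμ n m h
  · rw [← S_conj hpsd (gs_supported hμ n) (gs_supported hμ m),
      gs_orth hpsd hμ m n h, map_zero]

/-- Orthogonality of the residual of projecting any supported vector `v`. -/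
lemma proj_orth (hpsd : IsPosSemidefOn A U) (hμ : ∀ k, μ k ∈ A)
    (v : ℂ →₀ ℂ) (N m : ℕ) (hm : m < N) :
    S U (gs U μ m)
      (v - ∑ m' ∈ Finset.range N, S U (gs U μ m') v • gs U μ m') = 0 := by
  rcases gs_norm hpsd hμ m with hnorm | hzero
  · rw [S_sub_right, S_sum_right]
    have hterm : ∀ m' ∈ Finset.range N, m' ≠ m →
        S U (gs U μ m) (S U (gs U μ m') v • gs U μ m') = 0 := by
      intro m' _ hne
      rw [S_smul_right, gs_orth' hpsd hμ m' m (by omega), mul_zero]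
    rw [Finset.sum_eq_single_of_mem m (Finset.mem_range.mpr hm) hterm,
      S_smul_right, hnorm, mul_one, sub_self]
  · rw [hzero, S_zero_left]

/-- The `n`-th basis point is, modulo a null vector, in the span of `gs 0, …, gs n`. -/
lemma gs_residual_null (hpsd : IsPosSemidefOn A U) (hμ : ∀ k, μ k ∈ A) (n : ℕ) :
    (S U (Finsupp.single (μ n) 1 -
        ∑ m ∈ Finset.range (n+1), S U (gs U μ m) (Finsupp.single (μ n) 1) • gs U μ m)
      (Finsupp.single (μ n) 1 -
        ∑ m ∈ Finset.range (n+1), S U (gs U μ m) (Finsupp.single (μ n) 1) • gs U μ m)).re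
      = 0 := by
  have hrw : Finsupp.single (μ n) 1 -
      ∑ m ∈ Finset.range (n+1), S U (gs U μ m) (Finsupp.single (μ n) 1) • gs U μ m
      = gsd U μ n - S U (gs U μ n) (Finsupp.single (μ n) 1) • gs U μ n := by
    rw [Finset.sum_range_succ]
    unfold gsd
    abel
  rw [hrw]
  set d := gsd U μ n with hd
  set t := (S U d d).re with ht
  have ht0 : 0 ≤ t := S_self_re_nonneg hpsd (gsd_supported hμ n)
  rcases eq_or_lt_of_le ht0 with h0 | hpos
  · have hz : gs U μ n = 0 := by rw [gs_eq, ← hd, ← ht, ← h0]; simp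
    rw [hz]
    simp only [S_zero_left, zero_smul, sub_zero, smul_zero]
    rw [← ht, ← h0]
  ·
    have hδ : Finsupp.single (μ n) 1
        = d + ∑ m ∈ Finset.range n, S U (gs U μ m) (Finsupp.single (μ n) 1) • gs U μ m := by
      rw [hd]; unfold gsd; abel
    have hSdd : S U d d = (t:ℂ) := by rw [ht]; exact S_self_eq_re hpsd (gsd_supported hμ n)
    have hsd : S U (gs U μ n) d = (Real.sqrt t : ℂ) := by
      rw [gs_eq U μ n, ← hd, S_smul_left, hSdd]
      simp only [Complex.ofReal_re]
      have hconj : (starRingEnd ℂ) (((Real.sqrt t : ℝ) : ℂ))⁻¹ = (((Real.sqrt t : ℝ) : ℂ))⁻¹ := by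
        rw [map_inv₀, Complex.conj_ofReal]
      rw [hconj]
      norm_cast
      rw [inv_mul_eq_div, div_eq_iff (ne_of_gt (Real.sqrt_pos.mpr hpos))]
      exact (Real.mul_self_sqrt ht0).symm
    have hsum0 : S U (gs U μ n) (Finsupp.single (μ n) 1) = (Real.sqrt t : ℂ) := by
      conv_lhs => rw [hδ]
      rw [S_add_right, S_sum_right, hsd]
      have hz : ∀ m ∈ Finset.range n,
          S U (gs U μ n) (S U (gs U μ m) (Finsupp.single (μ n) 1) • gs U μ m) = 0 := by
        intro m hm
        rw [S_smul_right, gs_orth' hpsd hμ m n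
          (by have := Finset.mem_range.mp hm; omega), mul_zero]
      rw [Finset.sum_congr rfl hz, Finset.sum_const_zero, add_zero]
    have hres : d - S U (gs U μ n) (Finsupp.single (μ n) 1) • gs U μ n = 0 := by
      rw [hsum0, gs_eq U μ n, ← hd, ← ht, smul_smul,
        mul_inv_cancel₀ (Complex.ofReal_ne_zero.mpr (ne_of_gt (Real.sqrt_pos.mpr hpos)))]
      simp
    rw [hres]
    simp [S_zero_right]

/-- The factor functions. -/
def ff (U : ℂ → ℂ → ℂ) (μ : ℕ → ℂ) (n : ℕ) (l : ℂ) : ℂ :=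
  S U (Finsupp.single l 1) (gs U μ n)

/-- Residual of `δ_l` after projecting on the first `N` Gram–Schmidt vectors. -/
def rho (U : ℂ → ℂ → ℂ) (μ : ℕ → ℂ) (N : ℕ) (l : ℂ) : ℂ →₀ ℂ :=
  Finsupp.single l 1 -
    ∑ m ∈ Finset.range N, S U (gs U μ m) (Finsupp.single l 1) • gs U μ m

/-- Squared distance of `δ_l` to the span of the first `N` Gram–Schmidt vectors. -/
def tN (U : ℂ → ℂ → ℂ) (μ : ℕ → ℂ) (N : ℕ) (l : ℂ) : ℝ :=
  (S U (rho U μ N l) (rho U μ N l)).re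

lemma rho_supported (hμ : ∀ k, μ k ∈ A) {l : ℂ} (hl : l ∈ A) (N : ℕ) :
    ↑(rho U μ N l).support ⊆ A := by
  refine (Finsupp.mem_supported ℂ _).mp ?_
  refine Submodule.sub_mem _ (Finsupp.single_mem_supported ℂ 1 hl)
    (Submodule.sum_mem _ fun m _ => Submodule.smul_mem _ _ ?_)
  exact (Finsupp.mem_supported ℂ _).mpr (gs_supported hμ m)

lemma single_supported {l : ℂ} (hl : l ∈ A) :
    ↑(Finsupp.single l (1:ℂ)).support ⊆ A := by
  intro x hx
  have : x ∈ ({l} : Finset ℂ) := Finsupp.support_single_subset hx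
  simp only [Finset.mem_singleton] at this
  subst this
  exact hl

lemma S_gs_single (hpsd : IsPosSemidefOn A U) (hμ : ∀ k, μ k ∈ A)
    {l : ℂ} (hl : l ∈ A) (n : ℕ) :
    S U (gs U μ n) (Finsupp.single l 1) = conj (ff U μ n l) := by
  rw [ff]
  exact (S_conj hpsd (single_supported hl) (gs_supported hμ n)).symm

/-- Key identity: `S (ρ_N l) (ρ_N m) = U l m - ∑_{n<N} f_n(l) conj (f_n(m))`. -/
lemma S_rho_rho (hpsd : IsPosSemidefOn A U) (hμ : ∀ k, μ k ∈ A)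
    {l m : ℂ} (hl : l ∈ A) (hm : m ∈ A) (N : ℕ) :
    S U (rho U μ N l) (rho U μ N m)
      = U l m - ∑ n ∈ Finset.range N, ff U μ n l * conj (ff U μ n m) := by
  have h1 : S U (rho U μ N l) (rho U μ N m)
      = S U (Finsupp.single l 1) (rho U μ N m) := by
    rw [rho, S_sub_left, S_sum_left]
    have hz : ∀ n ∈ Finset.range N,
        S U (S U (gs U μ n) (Finsupp.single l 1) • gs U μ n) (rho U μ N m) = 0 := by
      intro n hn
      rw [S_smul_left, rho, proj_orth hpsd hμ _ N n (Finset.mem_range.mp hn), mul_zero]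
    rw [Finset.sum_congr rfl hz, Finset.sum_const_zero, sub_zero]
  rw [h1, rho, S_sub_right, S_sum_right, S_single_single]
  congr 1
  refine Finset.sum_congr rfl fun n _ => ?_
  rw [S_smul_right, S_gs_single hpsd hμ hm n, ← ff]
  ring

lemma tN_eq (hpsd : IsPosSemidefOn A U) (hμ : ∀ k, μ k ∈ A)
    {l : ℂ} (hl : l ∈ A) (N : ℕ) :
    tN U μ N l = (U l l).re - ∑ n ∈ Finset.range N, Complex.normSq (ff U μ n l) := by
  rw [tN, S_rho_rho hpsd hμ hl hl N]
  rw [Complex.sub_re, Complex.re_sum]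
  congr 1
  refine Finset.sum_congr rfl fun n _ => ?_
  rw [Complex.mul_conj]
  simp

lemma tN_nonneg (hpsd : IsPosSemidefOn A U) (hμ : ∀ k, μ k ∈ A)
    {l : ℂ} (hl : l ∈ A) (N : ℕ) : 0 ≤ tN U μ N l :=
  S_self_re_nonneg hpsd (rho_supported hμ hl N)

lemma tN_antitone (hpsd : IsPosSemidefOn A U) (hμ : ∀ k, μ k ∈ A)
    {l : ℂ} (hl : l ∈ A) {N N' : ℕ} (h : N ≤ N') : tN U μ N' l ≤ tN U μ N l := by
  rw [tN_eq hpsd hμ hl, tN_eq hpsd hμ hl]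
  have : ∑ n ∈ Finset.range N, Complex.normSq (ff U μ n l)
      ≤ ∑ n ∈ Finset.range N', Complex.normSq (ff U μ n l) :=
    Finset.sum_le_sum_of_subset_of_nonneg (Finset.range_subset_range.mpr h)
      (fun n _ _ => Complex.normSq_nonneg _)
  linarith

/-- The remainder bound via Cauchy–Schwarz. -/
lemma remainder_bound (hpsd : IsPosSemidefOn A U) (hμ : ∀ k, μ k ∈ A)
    {l m : ℂ} (hl : l ∈ A) (hm : m ∈ A) (N : ℕ) :
    Complex.normSq (U l m - ∑ n ∈ Finset.range N, ff U μ n l * conj (ff U μ n m))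
      ≤ tN U μ N l * tN U μ N m := by
  rw [← S_rho_rho hpsd hμ hl hm N]
  exact S_cauchy_schwarz hpsd (rho_supported hμ hl N) (rho_supported hμ hm N)

/-- Projection minimality. -/
lemma tN_min (hpsd : IsPosSemidefOn A U) (hμ : ∀ k, μ k ∈ A)
    {l : ℂ} (hl : l ∈ A) (N : ℕ) (γ : ℕ → ℂ) :
    tN U μ N l ≤ (S U (Finsupp.single l 1 - ∑ m ∈ Finset.range N, γ m • gs U μ m)
      (Finsupp.single l 1 - ∑ m ∈ Finset.range N, γ m • gs U μ m)).re := by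
  have hv : Finsupp.single l 1 - ∑ m ∈ Finset.range N, γ m • gs U μ m
      = rho U μ N l + ∑ m ∈ Finset.range N,
          (S U (gs U μ m) (Finsupp.single l 1) - γ m) • gs U μ m := by
    rw [rho]
    have h1 : ∑ m ∈ Finset.range N,
        (S U (gs U μ m) (Finsupp.single l 1) - γ m) • gs U μ m
        = ∑ m ∈ Finset.range N, S U (gs U μ m) (Finsupp.single l 1) • gs U μ m
          - ∑ m ∈ Finset.range N, γ m • gs U μ m := by
      rw [← Finset.sum_sub_distrib]
      exact Finset.sum_congr rfl fun m _ => sub_smul _ _ _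
    rw [h1]
    abel
  set Δ : ℂ →₀ ℂ := ∑ m ∈ Finset.range N,
    (S U (gs U μ m) (Finsupp.single l 1) - γ m) • gs U μ m with hΔ
  have hΔsupp : ↑Δ.support ⊆ A := by
    refine (Finsupp.mem_supported ℂ _).mp ?_
    exact Submodule.sum_mem _ fun m _ => Submodule.smul_mem _ _
      ((Finsupp.mem_supported ℂ _).mpr (gs_supported hμ m))
  have hΔrho : S U Δ (rho U μ N l) = 0 := by
    rw [hΔ, S_sum_left]
    refine Finset.sum_eq_zero fun m hm => ?_
    rw [S_smul_left, rho, proj_orth hpsd hμ _ N m (Finset.mem_range.mp hm), mul_zero]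
  have hrhoΔ : S U (rho U μ N l) Δ = 0 := by
    rw [← S_conj hpsd hΔsupp (rho_supported hμ hl N), hΔrho, map_zero]
  rw [hv, S_add_left, S_add_right, S_add_right, hΔrho, hrhoΔ, add_zero, zero_add]
  rw [Complex.add_re]
  have : 0 ≤ (S U Δ Δ).re := S_self_re_nonneg hpsd hΔsupp
  rw [tN]
  linarith

/-- Approximation by the `k`-th sample point. -/
lemma tN_le_dist (hpsd : IsPosSemidefOn A U) (hμ : ∀ k, μ k ∈ A)
    {l : ℂ} (hl : l ∈ A) (k N : ℕ) (hN : k + 1 ≤ N) :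
    tN U μ N l ≤ (S U (Finsupp.single l 1 - Finsupp.single (μ k) 1)
      (Finsupp.single l 1 - Finsupp.single (μ k) 1)).re := by
  classical
  set γ : ℕ → ℂ := fun m => if m < k + 1 then S U (gs U μ m) (Finsupp.single (μ k) 1) else 0
    with hγ
  have hw : ∑ m ∈ Finset.range N, γ m • gs U μ m
      = ∑ m ∈ Finset.range (k+1), S U (gs U μ m) (Finsupp.single (μ k) 1) • gs U μ m := by
    rw [← Finset.sum_subset (Finset.range_subset_range.mpr hN)]
    · refine Finset.sum_congr rfl fun m hm => ?_
      have : m < k + 1 := Finset.mem_range.mp hm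
      simp only [hγ, if_pos this]
    · intro m _ hm
      have : ¬ (m < k + 1) := fun h => hm (Finset.mem_range.mpr h)
      simp only [hγ, if_neg this, zero_smul]
  have hmin := tN_min hpsd hμ hl N γ
  rw [hw] at hmin
  set ν : ℂ →₀ ℂ := Finsupp.single (μ k) 1 -
      ∑ m ∈ Finset.range (k+1), S U (gs U μ m) (Finsupp.single (μ k) 1) • gs U μ m with hν
  have hνnull : (S U ν ν).re = 0 := gs_residual_null hpsd hμ k
  have hνsupp : ↑ν.support ⊆ A := by
    refine (Finsupp.mem_supported ℂ _).mp ?_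
    refine Submodule.sub_mem _ (Finsupp.single_mem_supported ℂ 1 (hμ k))
      (Submodule.sum_mem _ fun m _ => Submodule.smul_mem _ _
        ((Finsupp.mem_supported ℂ _).mpr (gs_supported hμ m)))
  set x : ℂ →₀ ℂ := Finsupp.single l 1 - Finsupp.single (μ k) 1 with hx
  have hxsupp : ↑x.support ⊆ A := by
    refine (Finsupp.mem_supported ℂ _).mp ?_
    exact Submodule.sub_mem _ (Finsupp.single_mem_supported ℂ 1 hl)
      (Finsupp.single_mem_supported ℂ 1 (hμ k))
  have hveq : Finsupp.single l 1 -
      ∑ m ∈ Finset.range (k+1), S U (gs U μ m) (Finsupp.single (μ k) 1) • gs U μ m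
      = x + ν := by
    rw [hx, hν]; abel
  rw [hveq] at hmin
  -- cross terms vanish
  have hSνν : S U ν ν = 0 := by
    have him : (S U ν ν).im = 0 := S_self_im_zero hpsd hνsupp
    apply Complex.ext <;> simp [hνnull, him]
  have hxν : S U x ν = 0 := by
    have := S_cauchy_schwarz hpsd hxsupp hνsupp
    rw [hSνν] at this
    simp only [Complex.zero_re, mul_zero] at this
    have h0 : Complex.normSq (S U x ν) = 0 :=
      le_antisymm (by simpa [hνnull] using S_cauchy_schwarz hpsd hxsupp hνsupp)
        (Complex.normSq_nonneg _)
    exact Complex.normSq_eq_zero.mp h0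
  have hνx : S U ν x = 0 := by
    rw [← S_conj hpsd hxsupp hνsupp, hxν, map_zero]
  rw [S_add_left, S_add_right, S_add_right, hxν, hνx, hSνν, add_zero, add_zero,
    add_zero] at hmin
  exact hmin

/-- A Dini-type uniform convergence lemma. -/
lemma dini_aux {K : Set ℂ} (hK : IsCompact K) (t : ℕ → ℂ → ℝ)
    (hcont : ∀ N, ContinuousOn (t N) K)
    (hanti : ∀ x ∈ K, ∀ N N', N ≤ N' → t N' x ≤ t N x)
    (hlim : ∀ x ∈ K, ∀ ε > 0, ∃ N, t N x < ε) :
    ∀ ε > 0, ∃ N0 : ℕ, ∀ N ≥ N0, ∀ x ∈ K, t N x < ε := by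
  intro ε hε
  -- for each point pick an index and an open neighborhood
  have key : ∀ x : K, ∃ N : ℕ, ∃ O : Set ℂ, IsOpen O ∧ (x:ℂ) ∈ O ∧
      ∀ y ∈ O ∩ K, t N y < ε := by
    rintro ⟨x, hx⟩
    obtain ⟨N, hN⟩ := hlim x hx ε hε
    have hc := (hcont N) x hx
    have hmem : {y | t N y < ε} ∈ nhdsWithin x K := by
      have : Set.Iio ε ∈ nhds (t N x) := Iio_mem_nhds hN
      exact hc this
    rw [mem_nhdsWithin] at hmem
    obtain ⟨O, hOopen, hxO, hOsub⟩ := hmem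
    exact ⟨N, O, hOopen, hxO, fun y hy => hOsub hy⟩
  choose Nf Of hOopen hxO hOsub using key
  have hcover : K ⊆ ⋃ x : K, Of x := fun y hy =>
    Set.mem_iUnion.mpr ⟨⟨y, hy⟩, hxO ⟨y, hy⟩⟩
  obtain ⟨s, hs⟩ := hK.elim_finite_subcover Of hOopen hcover
  refine ⟨s.sup Nf, fun N hN y hy => ?_⟩
  have hmem2 : ∃ i, ∃ (_ : i ∈ s), y ∈ Of i := by
    have := hs hy
    rwa [Set.mem_iUnion₂] at this
  obtain ⟨i, hi, hyO⟩ := hmem2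
  have h1 : t (Nf i) y < ε := hOsub i y ⟨hyO, hy⟩
  have h2 : Nf i ≤ N := le_trans (Finset.le_sup hi) hN
  exact lt_of_le_of_lt (hanti y hy (Nf i) N h2) h1

end HPSDaux

open HPSDaux in
/-- Every positive semi-definite hereditary function `U` on `A_r` factors as
`U(λ,μ) = ∑ₙ fₙ(λ) conj(fₙ(μ))` with `fₙ` holomorphic on `A_r`, the series
converging uniformly on compact subsets of `A_r × A_r`. -/
theorem hereditary_psd_factorization (r : ℝ) (hr0 : 0 < r) (hr1 : r < 1)
    (U : ℂ → ℂ → ℂ)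
    (hher : DifferentiableOn ℂ (fun p : ℂ × ℂ => U p.1 (conj p.2))
      ((annulus r) ×ˢ (annulus r)))
    (hpsd : IsPosSemidefOn (annulus r) U) :
    ∃ f : ℕ → ℂ → ℂ, (∀ n, DifferentiableOn ℂ (f n) (annulus r)) ∧
      (∀ l ∈ annulus r, ∀ m ∈ annulus r,
        HasSum (fun n : ℕ => f n l * conj (f n m)) (U l m)) ∧
      ∀ K ⊆ (annulus r) ×ˢ (annulus r), IsCompact K →
        TendstoUniformlyOn
          (fun (N : ℕ) (p : ℂ × ℂ) => ∑ n ∈ Finset.range N, f n p.1 * conj (f n p.2))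
          (fun p => U p.1 p.2) Filter.atTop K := by
  classical
  set A := annulus r with hA
  have hconjA : ∀ {z : ℂ}, z ∈ A → conj z ∈ A := by
    intro z hz
    simpa [hA, annulus, Complex.norm_conj] using hz
  -- differentiability in the first variable
  have hUdiff_fst : ∀ m ∈ A, DifferentiableOn ℂ (fun l => U l m) A := by
    intro m hm
    have hco : (fun l => U l m)
        = (fun p : ℂ × ℂ => U p.1 (conj p.2)) ∘ (fun l : ℂ => (l, conj m)) := by
      funext l; simp [Function.comp]
    rw [hco]
    refine hher.comp ?_ (fun l hl => Set.mk_mem_prod hl (hconjA hm))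
    exact (differentiable_id.prodMk (differentiable_const _)).differentiableOn
  -- joint continuity of U
  have hUcont2 : ContinuousOn (fun p : ℂ × ℂ => U p.1 p.2) (A ×ˢ A) := by
    have hco : (fun p : ℂ × ℂ => U p.1 p.2)
        = (fun p : ℂ × ℂ => U p.1 (conj p.2)) ∘ (fun p : ℂ × ℂ => (p.1, conj p.2)) := by
      funext p; simp [Function.comp]
    rw [hco]
    exact hher.continuousOn.comp
      ((continuous_fst.prodMk (Complex.continuous_conj.comp continuous_snd)).continuousOn)
      (fun p hp => ⟨hp.1, hconjA hp.2⟩)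
  -- a dense sequence in the annulus
  haveI hne : Nonempty ↥A := by
    refine ⟨⟨(((r+1)/2 : ℝ) : ℂ), ?_⟩⟩
    constructor
    · rw [Complex.norm_of_nonneg (r := (r+1)/2) (by linarith)]; linarith
    · rw [Complex.norm_of_nonneg (r := (r+1)/2) (by linarith)]; linarith
  set μ : ℕ → ℂ := fun k => (TopologicalSpace.denseSeq ↥A k : ℂ) with hμdef
  have hμ : ∀ k, μ k ∈ A := fun k => (TopologicalSpace.denseSeq ↥A k).2
  have hdense : ∀ l ∈ A, ∀ O : Set ℂ, IsOpen O → l ∈ O → ∃ k, μ k ∈ O := by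
    intro l hl O hO hlO
    have hds := TopologicalSpace.denseRange_denseSeq ↥A
    have hopen : IsOpen ((Subtype.val : ↥A → ℂ) ⁻¹' O) :=
      hO.preimage continuous_subtype_val
    have hnonempty : ((Subtype.val : ↥A → ℂ) ⁻¹' O).Nonempty := ⟨⟨l, hl⟩, hlO⟩
    obtain ⟨k, hk⟩ := hds.exists_mem_open hopen hnonempty
    exact ⟨k, hk⟩
  -- differentiability of the factor functions
  have hfdiff : ∀ n, DifferentiableOn ℂ (ff U μ n) A := by
    intro n
    have heq : ff U μ n
        = fun l => ∑ i ∈ (gs U μ n).support, (gs U μ n) i * U l i := by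
      funext l; exact S_single_left U l (gs U μ n)
    rw [heq]
    refine DifferentiableOn.fun_sum fun i hi => ?_
    exact (differentiableOn_const _).mul
      (hUdiff_fst i (gs_supported hμ n (Finset.mem_coe.mpr hi)))
  -- pointwise convergence of the distances tN to 0
  have hlim : ∀ l ∈ A, ∀ ε > 0, ∃ N0 : ℕ, ∀ N ≥ N0, tN U μ N l < ε := by
    intro l hl ε hε
    set G : ℂ → ℝ := fun z => (U l l - U l z - U z l + U z z).re with hG
    have hGcont : ContinuousOn G A := by
      have c1 : ContinuousOn (fun z => U l z) A := by
        refine hUcont2.comp ?_ (fun z hz => Set.mk_mem_prod hl hz)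
        exact (continuous_const.prodMk continuous_id).continuousOn
      have c2 : ContinuousOn (fun z => U z l) A := by
        refine hUcont2.comp ?_ (fun z hz => Set.mk_mem_prod hz hl)
        exact (continuous_id.prodMk continuous_const).continuousOn
      have c3 : ContinuousOn (fun z => U z z) A := by
        refine hUcont2.comp ?_ (fun z hz => Set.mk_mem_prod hz hz)
        exact (continuous_id.prodMk continuous_id).continuousOn
      exact Complex.continuous_re.comp_continuousOn
        (((continuousOn_const.sub c1).sub c2).add c3)
    have hGl : G l = 0 := by
      have : U l l - U l l - U l l + U l l = 0 := by ring
      rw [hG]; simp [this]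
    have hmem : {z | G z < ε} ∈ nhdsWithin l A := by
      have h1 : Set.Iio ε ∈ nhds (G l) := Iio_mem_nhds (by rw [hGl]; exact hε)
      exact hGcont l hl h1
    rw [mem_nhdsWithin] at hmem
    obtain ⟨O, hOopen, hlO, hOsub⟩ := hmem
    obtain ⟨k, hkO⟩ := hdense l hl O hOopen hlO
    have hGk : G (μ k) < ε := hOsub ⟨hkO, hμ k⟩
    refine ⟨k + 1, fun N hN => ?_⟩
    have hle := tN_le_dist hpsd hμ hl k N hN
    have hexp : (S U (Finsupp.single l 1 - Finsupp.single (μ k) 1)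
        (Finsupp.single l 1 - Finsupp.single (μ k) 1)).re = G (μ k) := by
      rw [S_sub_left, S_sub_right, S_sub_right, S_single_single, S_single_single,
        S_single_single, S_single_single, hG]
      congr 1
      ring
    rw [hexp] at hle
    exact lt_of_le_of_lt hle hGk
  refine ⟨ff U μ, hfdiff, ?_, ?_⟩
  · -- HasSum
    intro l hl m hm
    have hsum_l : Summable (fun n => Complex.normSq (ff U μ n l)) := by
      refine summable_of_sum_range_le (c := (U l l).re) (fun n => Complex.normSq_nonneg _) (fun N => ?_)
      have h1 := tN_eq hpsd hμ hl N
      have h2 := tN_nonneg hpsd hμ hl N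
      linarith
    have hsum_m : Summable (fun n => Complex.normSq (ff U μ n m)) := by
      refine summable_of_sum_range_le (c := (U m m).re) (fun n => Complex.normSq_nonneg _) (fun N => ?_)
      have h1 := tN_eq hpsd hμ hm N
      have h2 := tN_nonneg hpsd hμ hm N
      linarith
    have hterm : ∀ n, ‖ff U μ n l * conj (ff U μ n m)‖
        ≤ (Complex.normSq (ff U μ n l) + Complex.normSq (ff U μ n m)) / 2 := by
      intro n
      rw [norm_mul, RCLike.norm_conj]
      rw [← Complex.sq_norm, ← Complex.sq_norm]
      nlinarith [sq_nonneg (‖ff U μ n l‖ - ‖ff U μ n m‖),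
        norm_nonneg (ff U μ n l), norm_nonneg (ff U μ n m)]
    have hsummable : Summable (fun n => ff U μ n l * conj (ff U μ n m)) :=
      Summable.of_norm_bounded ((hsum_l.add hsum_m).div_const 2) hterm
    have htend : Filter.Tendsto
        (fun N => ∑ n ∈ Finset.range N, ff U μ n l * conj (ff U μ n m))
        Filter.atTop (nhds (U l m)) := by
      rw [Metric.tendsto_atTop]
      intro ε hε
      obtain ⟨N1, hN1⟩ := hlim l hl (ε/2) (half_pos hε)
      obtain ⟨N2, hN2⟩ := hlim m hm (ε/2) (half_pos hε)
      refine ⟨max N1 N2, fun N hN => ?_⟩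
      have h1 : tN U μ N l < ε/2 := hN1 N (le_trans (le_max_left _ _) hN)
      have h2 : tN U μ N m < ε/2 := hN2 N (le_trans (le_max_right _ _) hN)
      have hprod : tN U μ N l * tN U μ N m < (ε/2) * (ε/2) :=
        mul_lt_mul'' h1 h2 (tN_nonneg hpsd hμ hl N) (tN_nonneg hpsd hμ hm N)
      have hRB := remainder_bound hpsd hμ hl hm (μ := μ) N
      have habs : ‖U l m - ∑ n ∈ Finset.range N,
          ff U μ n l * conj (ff U μ n m)‖ < ε/2 := by
        have hsq : ‖U l m - ∑ n ∈ Finset.range N,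
            ff U μ n l * conj (ff U μ n m)‖ ^ 2 < (ε/2)^2 := by
          rw [Complex.sq_norm]
          calc _ ≤ tN U μ N l * tN U μ N m := hRB
            _ < (ε/2)*(ε/2) := hprod
            _ = (ε/2)^2 := by ring
        exact lt_of_pow_lt_pow_left₀ 2 (le_of_lt (half_pos hε)) hsq
      rw [Complex.dist_eq]
      have : ‖(∑ n ∈ Finset.range N, ff U μ n l * conj (ff U μ n m))
          - U l m‖ = ‖U l m - ∑ n ∈ Finset.range N,
          ff U μ n l * conj (ff U μ n m)‖ := by
        rw [← norm_neg]
        congr 1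
        ring
      rw [this]
      linarith
    have heq : ∑' n, ff U μ n l * conj (ff U μ n m) = U l m :=
      tendsto_nhds_unique hsummable.hasSum.tendsto_sum_nat htend
    exact heq ▸ hsummable.hasSum
  · -- uniform convergence on compacts
    intro K hKsub hK
    rw [Metric.tendstoUniformlyOn_iff]
    intro ε hε
    set K1 : Set ℂ := (Prod.fst '' K) ∪ (Prod.snd '' K) with hK1
    have hK1cpt : IsCompact K1 := (hK.image continuous_fst).union (hK.image continuous_snd)
    have hK1A : K1 ⊆ A := by
      rintro x (⟨p, hp, rfl⟩ | ⟨p, hp, rfl⟩)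
      · exact (hKsub hp).1
      · exact (hKsub hp).2
    have hcontN : ∀ N, ContinuousOn (tN U μ N) K1 := by
      intro N
      refine ContinuousOn.mono ?_ hK1A
      have hg : ContinuousOn
          (fun l => (U l l).re - ∑ n ∈ Finset.range N, Complex.normSq (ff U μ n l)) A := by
        have c3 : ContinuousOn (fun z => (U z z).re) A := by
          refine Complex.continuous_re.comp_continuousOn ?_
          refine hUcont2.comp ?_ (fun z hz => Set.mk_mem_prod hz hz)
          exact (continuous_id.prodMk continuous_id).continuousOn
        refine c3.sub ?_
        refine continuousOn_finset_sum _ fun n _ => ?_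
        exact Complex.continuous_normSq.comp_continuousOn (hfdiff n).continuousOn
      exact ContinuousOn.congr hg (fun l hl => tN_eq hpsd hμ hl N)
    have hanti : ∀ x ∈ K1, ∀ N N' : ℕ, N ≤ N' → tN U μ N' x ≤ tN U μ N x :=
      fun x hx N N' h => tN_antitone hpsd hμ (hK1A hx) h
    have hlim' : ∀ x ∈ K1, ∀ ε' > 0, ∃ N, tN U μ N x < ε' := by
      intro x hx ε' hε'
      obtain ⟨N0, hN0⟩ := hlim x (hK1A hx) ε' hε'
      exact ⟨N0, hN0 N0 le_rfl⟩
    obtain ⟨N0, hN0⟩ := dini_aux hK1cpt (tN U μ) hcontN hanti hlim' (ε/2) (half_pos hε)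
    refine Filter.eventually_atTop.mpr ⟨N0, fun N hN p hp => ?_⟩
    have hp1 : p.1 ∈ K1 := Set.mem_union_left _ ⟨p, hp, rfl⟩
    have hp2 : p.2 ∈ K1 := Set.mem_union_right _ ⟨p, hp, rfl⟩
    have h1 : tN U μ N p.1 < ε/2 := hN0 N hN p.1 hp1
    have h2 : tN U μ N p.2 < ε/2 := hN0 N hN p.2 hp2
    have hprod : tN U μ N p.1 * tN U μ N p.2 < (ε/2) * (ε/2) :=
      mul_lt_mul'' h1 h2 (tN_nonneg hpsd hμ (hK1A hp1) N) (tN_nonneg hpsd hμ (hK1A hp2) N)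
    have hRB := remainder_bound hpsd hμ (hK1A hp1) (hK1A hp2) (μ := μ) N
    have habs : ‖U p.1 p.2 - ∑ n ∈ Finset.range N,
        ff U μ n p.1 * conj (ff U μ n p.2)‖ < ε/2 := by
      have hsq : ‖U p.1 p.2 - ∑ n ∈ Finset.range N,
          ff U μ n p.1 * conj (ff U μ n p.2)‖ ^ 2 < (ε/2)^2 := by
        rw [Complex.sq_norm]
        calc _ ≤ tN U μ N p.1 * tN U μ N p.2 := hRB
          _ < (ε/2)*(ε/2) := hprod
          _ = (ε/2)^2 := by ring
      exact lt_of_pow_lt_pow_left₀ 2 (le_of_lt (half_pos hε)) hsq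
    rw [Complex.dist_eq]
    linarith


end
end

section
/- Let 0 < r < 1, let H be a complex Hilbert space, and let T be an invertible bounded operator on H satisfying r²·T⁻¹(T⁻¹)* + T·T* ≤ (r²+1)·I. Then r²·I ≤ T·T* ≤ I (equivalently ‖T‖ ≤ 1 and ‖r·T⁻¹‖ ≤ 1), and consequently the spectrum of T is contained in the closed annulus {z ∈ ℂ : r ≤ |z| ≤ 1}. -/
open Complex ComplexConjugate ContinuousLinearMap
open scoped ComplexOrder

noncomputable section

lemma rclike_ofReal_eq_complex (x : ℝ) : (RCLike.ofReal x : ℂ) = Complex.ofReal x := rfl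

lemma descent_aux (b : ℕ → ℝ) (hb : ∀ n, 0 ≤ b n) {δ : ℝ} (hδ : 0 < δ)
    (h : ∀ n, b (n + 1) ≤ b n - δ) : False := by
  have key : ∀ n : ℕ, b n ≤ b 0 - n * δ := by
    intro n
    induction n with
    | zero => simp
    | succ n ih =>
      have := h n
      push_cast
      linarith
  obtain ⟨n, hn⟩ := exists_nat_gt (b 0 / δ)
  have h1 := key n
  have h2 := hb n
  rw [div_lt_iff₀ hδ] at hn
  linarith

lemma le_of_le_sq_mul {r δ X : ℝ} (hr2 : 0 < r ^ 2) (hr21 : r ^ 2 ≤ 1) (hδ : 0 < δ)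
    (h : δ ≤ r ^ 2 * X) : δ ≤ X := by
  rcases le_or_gt X 0 with hX | hX
  · nlinarith
  · nlinarith [mul_le_mul_of_nonneg_right hr21 hX.le]

lemma key_bounds (r : ℝ) (hr0 : 0 < r) (hr1 : r < 1)
    {H : Type} [NormedAddCommGroup H] [InnerProductSpace ℂ H]
    (A B : H →L[ℂ] H) (hBA : ∀ y, B (A y) = y) (hAB : ∀ y, A (B y) = y)
    (hstar : ∀ y : H, r ^ 2 * ‖B y‖ ^ 2 + ‖A y‖ ^ 2 ≤ (r ^ 2 + 1) * ‖y‖ ^ 2) :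
    (∀ y : H, ‖A y‖ ≤ ‖y‖) ∧ (∀ y : H, r * ‖y‖ ≤ ‖A y‖) := by
  have hr2 : 0 < r ^ 2 := by positivity
  have hr21 : r ^ 2 ≤ 1 := by nlinarith
  constructor
  · intro y
    by_contra hcon
    push_neg at hcon
    set δ : ℝ := ‖A y‖ ^ 2 - ‖y‖ ^ 2 with hδdef
    have hδ : 0 < δ := by
      have h0 : 0 ≤ ‖y‖ := norm_nonneg _
      nlinarith
    set c : ℕ → ℝ := fun n => ‖(⇑B)^[n] y‖ ^ 2 with hc
    have hcn : ∀ n, 0 ≤ c n := fun n => by positivity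
    have hrec : ∀ n : ℕ, r ^ 2 * c (n + 2) + c n ≤ (r ^ 2 + 1) * c (n + 1) := by
      intro n
      have h0 := hstar ((⇑B)^[n + 1] y)
      rw [show A ((⇑B)^[n + 1] y) = (⇑B)^[n] y from by
            rw [Function.iterate_succ_apply']; exact hAB _,
          show B ((⇑B)^[n + 1] y) = (⇑B)^[n + 2] y from
            (Function.iterate_succ_apply' _ _ _).symm] at h0
      exact h0
    have hgap : ∀ n, c (n + 1) ≤ c n - δ := by
      intro n
      induction n with
      | zero =>
        have e0 : r ^ 2 * c 1 + ‖A y‖ ^ 2 ≤ (r ^ 2 + 1) * c 0 := hstar y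
        have hc0 : c 0 = ‖y‖ ^ 2 := by simp [hc]
        have hd : δ ≤ r ^ 2 * (c 0 - c 1) := by rw [hδdef, hc0]; nlinarith
        have := le_of_le_sq_mul hr2 hr21 hδ hd
        linarith
      | succ n ih =>
        have e := hrec n
        have hd : δ ≤ r ^ 2 * (c (n + 1) - c (n + 2)) := by nlinarith
        have := le_of_le_sq_mul hr2 hr21 hδ hd
        linarith
    exact descent_aux c hcn hδ hgap
  · intro y
    by_contra hcon
    push_neg at hcon
    set δ : ℝ := r ^ 2 * ‖y‖ ^ 2 - ‖A y‖ ^ 2 with hδdef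
    have hδ : 0 < δ := by
      have h0 : 0 ≤ ‖A y‖ := norm_nonneg _
      have h1 : 0 ≤ r * ‖y‖ := by positivity
      nlinarith
    set b : ℕ → ℝ := fun n => ‖(⇑A)^[n] y‖ ^ 2 with hbdef
    have hbn : ∀ n, 0 ≤ b n := fun n => by positivity
    have hrec : ∀ n : ℕ, r ^ 2 * b n + b (n + 2) ≤ (r ^ 2 + 1) * b (n + 1) := by
      intro n
      have h0 := hstar ((⇑A)^[n + 1] y)
      rw [show B ((⇑A)^[n + 1] y) = (⇑A)^[n] y from by
            rw [Function.iterate_succ_apply']; exact hBA _,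
          show A ((⇑A)^[n + 1] y) = (⇑A)^[n + 2] y from
            (Function.iterate_succ_apply' _ _ _).symm] at h0
      exact h0
    have he : ∀ n, b (n + 1) - r ^ 2 * b n ≤ -δ := by
      intro n
      induction n with
      | zero =>
        have h1 : b 1 = ‖A y‖ ^ 2 := by simp [hbdef]
        have h0 : b 0 = ‖y‖ ^ 2 := by simp [hbdef]
        rw [h1, h0, hδdef]
        ring_nf
        linarith
      | succ n ih =>
        have e := hrec n
        linarith
    have hgap : ∀ n, b (n + 1) ≤ b n - δ := by
      intro n
      have h1 := he n
      have h2 := hbn n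
      nlinarith
    exact descent_aux b hbn hδ hgap

/-- If `r²T⁻¹(T⁻¹)* + TT* ≤ (r²+1)I`, then `r²·I ≤ TT* ≤ I` (equivalently
`‖T‖ ≤ 1` and `‖rT⁻¹‖ ≤ 1`), and the spectrum of `T` lies in the closed annulus
`{r ≤ |z| ≤ 1}`. -/
theorem opCond_implies_closed_annulus (r : ℝ) (hr0 : 0 < r) (hr1 : r < 1)
    (H : Type) [NormedAddCommGroup H] [InnerProductSpace ℂ H] [CompleteSpace H]
    (T Tinv : H →L[ℂ] H) (h1 : T * Tinv = 1) (h2 : Tinv * T = 1)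
    (hop : opCond r T Tinv) :
    (T * ContinuousLinearMap.adjoint T - (r : ℂ) ^ 2 • 1).IsPositive ∧
    ((1 : H →L[ℂ] H) - T * ContinuousLinearMap.adjoint T).IsPositive ∧
    ‖T‖ ≤ 1 ∧ ‖(r : ℂ) • Tinv‖ ≤ 1 ∧
    spectrum ℂ T ⊆ {z : ℂ | r ≤ ‖z‖ ∧ ‖z‖ ≤ 1} := by
  have hadj1 : ContinuousLinearMap.adjoint (1 : H →L[ℂ] H) = 1 := by
    rw [← ContinuousLinearMap.star_eq_adjoint]; exact star_one _
  set A := ContinuousLinearMap.adjoint T with hA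
  set B := ContinuousLinearMap.adjoint Tinv with hB
  have hBAmul : B * A = 1 := by
    have h := ContinuousLinearMap.adjoint_comp T Tinv
    rw [show T.comp Tinv = (1 : H →L[ℂ] H) from h1, hadj1] at h
    exact h.symm
  have hABmul : A * B = 1 := by
    have h := ContinuousLinearMap.adjoint_comp Tinv T
    rw [show Tinv.comp T = (1 : H →L[ℂ] H) from h2, hadj1] at h
    exact h.symm
  have hBA : ∀ y, B (A y) = y := fun y => by
    calc B (A y) = (B * A) y := rfl
    _ = y := by rw [hBAmul]; rfl
  have hAB : ∀ y, A (B y) = y := fun y => by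
    calc A (B y) = (A * B) y := rfl
    _ = y := by rw [hABmul]; rfl
  -- the scalar inequality from positivity
  have hstar : ∀ y : H, r ^ 2 * ‖B y‖ ^ 2 + ‖A y‖ ^ 2 ≤ (r ^ 2 + 1) * ‖y‖ ^ 2 := by
    intro y
    have h0 := hop.2 y
    rw [ContinuousLinearMap.reApplyInnerSelf_apply] at h0
    have hP : (((r : ℂ) ^ 2 + 1) • (1 : H →L[ℂ] H)
        - ((r : ℂ) ^ 2 • (Tinv * B) + T * A)) y
        = ((r : ℂ) ^ 2 + 1) • y - ((r : ℂ) ^ 2 • Tinv (B y) + T (A y)) := by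
      simp only [ContinuousLinearMap.sub_apply, ContinuousLinearMap.add_apply,
        ContinuousLinearMap.smul_apply, ContinuousLinearMap.mul_apply,
        ContinuousLinearMap.one_apply]
    rw [hP, inner_sub_left, inner_add_left, inner_smul_left, inner_smul_left,
      show (inner ℂ (Tinv (B y)) y : ℂ) = inner ℂ (B y) (ContinuousLinearMap.adjoint Tinv y) from
        (ContinuousLinearMap.adjoint_inner_right Tinv (B y) y).symm,
      show (inner ℂ (T (A y)) y : ℂ) = inner ℂ (A y) (ContinuousLinearMap.adjoint T y) from
        (ContinuousLinearMap.adjoint_inner_right T (A y) y).symm,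
      ← hA, ← hB,
      inner_self_eq_norm_sq_to_K, inner_self_eq_norm_sq_to_K,
      inner_self_eq_norm_sq_to_K] at h0
    simp only [map_add, map_pow, map_one, Complex.conj_ofReal,
      rclike_ofReal_eq_complex, RCLike.re_eq_complex_re] at h0
    norm_cast at h0
    linarith
  obtain ⟨hup, hlow⟩ := key_bounds r hr0 hr1 A B hBA hAB hstar
  -- norm bounds
  have hnormA : ‖A‖ ≤ 1 := ContinuousLinearMap.opNorm_le_bound _ zero_le_one
    (fun y => by simpa using hup y)
  have hTnorm : ‖T‖ ≤ 1 := by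
    have hnm : ‖A‖ = ‖T‖ := by
      rw [hA]
      exact LinearIsometryEquiv.norm_map (ContinuousLinearMap.adjoint :
        (H →L[ℂ] H) ≃ₗᵢ⋆[ℂ] (H →L[ℂ] H)) T
    linarith
  have hnormB : ‖B‖ ≤ 1 / r := by
    apply ContinuousLinearMap.opNorm_le_bound _ (by positivity)
    intro z
    have hz := hlow (B z)
    rw [hAB] at hz
    rw [div_mul_eq_mul_div, le_div_iff₀ hr0]
    linarith
  have hTinvnorm : ‖Tinv‖ ≤ 1 / r := by
    have hnm : ‖B‖ = ‖Tinv‖ := by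
      rw [hB]
      exact LinearIsometryEquiv.norm_map (ContinuousLinearMap.adjoint :
        (H →L[ℂ] H) ≃ₗᵢ⋆[ℂ] (H →L[ℂ] H)) Tinv
    linarith
  have hTAsa : IsSelfAdjoint (T * A) := by
    rw [IsSelfAdjoint, star_mul, hA, ContinuousLinearMap.star_eq_adjoint,
      ContinuousLinearMap.star_eq_adjoint, adjoint_adjoint]
  refine ⟨?_, ?_, hTnorm, ?_, ?_⟩
  · constructor
    · have hsm : IsSelfAdjoint ((r : ℂ) ^ 2 • (1 : H →L[ℂ] H)) := by
        rw [IsSelfAdjoint, star_smul]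
        simp [Complex.star_def, ← Complex.ofReal_pow, Complex.conj_ofReal]
      exact isSelfAdjoint_iff_isSymmetric.mp (hTAsa.sub hsm)
    · intro x
      rw [ContinuousLinearMap.reApplyInnerSelf_apply]
      have hx : (T * A - (r : ℂ) ^ 2 • 1) x = T (A x) - (r : ℂ) ^ 2 • x := by
        simp only [ContinuousLinearMap.sub_apply, ContinuousLinearMap.mul_apply,
          ContinuousLinearMap.smul_apply, ContinuousLinearMap.one_apply]
      rw [hx, inner_sub_left, inner_smul_left,
        show (inner ℂ (T (A x)) x : ℂ) = inner ℂ (A x) (ContinuousLinearMap.adjoint T x) from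
          (ContinuousLinearMap.adjoint_inner_right T (A x) x).symm,
        ← hA, inner_self_eq_norm_sq_to_K, inner_self_eq_norm_sq_to_K]
      simp only [map_pow, Complex.conj_ofReal, rclike_ofReal_eq_complex, RCLike.re_eq_complex_re]
      norm_cast
      have := hlow x
      nlinarith [norm_nonneg x, norm_nonneg (A x), mul_nonneg hr0.le (norm_nonneg x)]
  · constructor
    · have hone : IsSelfAdjoint (1 : H →L[ℂ] H) := by
        rw [IsSelfAdjoint]
        exact star_one _
      exact isSelfAdjoint_iff_isSymmetric.mp (hone.sub hTAsa)
    · intro x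
      rw [ContinuousLinearMap.reApplyInnerSelf_apply]
      have hx : ((1 : H →L[ℂ] H) - T * A) x = x - T (A x) := by
        simp only [ContinuousLinearMap.sub_apply, ContinuousLinearMap.mul_apply,
          ContinuousLinearMap.one_apply]
      rw [hx, inner_sub_left,
        show (inner ℂ (T (A x)) x : ℂ) = inner ℂ (A x) (ContinuousLinearMap.adjoint T x) from
          (ContinuousLinearMap.adjoint_inner_right T (A x) x).symm,
        ← hA, inner_self_eq_norm_sq_to_K, inner_self_eq_norm_sq_to_K]
      simp only [rclike_ofReal_eq_complex, RCLike.re_eq_complex_re]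
      norm_cast
      have := hup x
      nlinarith [norm_nonneg x, norm_nonneg (A x)]
  · rw [norm_smul]
    simp only [Complex.norm_real, Real.norm_eq_abs, abs_of_pos hr0]
    calc r * ‖Tinv‖ ≤ r * (1 / r) := mul_le_mul_of_nonneg_left hTinvnorm hr0.le
    _ = 1 := by field_simp
  · intro z hz
    rcases subsingleton_or_nontrivial H with hsub | hnt
    · exfalso
      rw [spectrum.mem_iff] at hz
      exact hz (isUnit_of_subsingleton _)
    · have hzT : ‖z‖ ≤ ‖T‖ := spectrum.norm_le_norm_of_mem hz
      set Tu : (H →L[ℂ] H)ˣ := ⟨T, Tinv, h1, h2⟩ with hTu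
      have hz0 : z ≠ 0 := by
        intro h0
        rw [h0] at hz
        exact spectrum.zero_notMem ℂ Tu.isUnit hz
      set zu : ℂˣ := Units.mk0 z hz0 with hzu
      have hinv : (↑zu⁻¹ : ℂ) ∈ spectrum ℂ (↑Tu⁻¹ : H →L[ℂ] H) :=
        spectrum.inv_mem_iff.mp hz
      have hnz : ‖(↑zu⁻¹ : ℂ)‖ ≤ ‖(↑Tu⁻¹ : H →L[ℂ] H)‖ := spectrum.norm_le_norm_of_mem hinv
      have hcoe : (↑Tu⁻¹ : H →L[ℂ] H) = Tinv := rfl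
      have hzcoe : (↑zu⁻¹ : ℂ) = z⁻¹ := rfl
      rw [hcoe, hzcoe, norm_inv] at hnz
      have hzpos : 0 < ‖z‖ := norm_pos_iff.mpr hz0
      have hchain : ‖z‖⁻¹ ≤ 1 / r := hnz.trans hTinvnorm
      have hzz : ‖z‖⁻¹ * ‖z‖ = 1 := inv_mul_cancel₀ hzpos.ne'
      have hrr : r * (1 / r) = 1 := by field_simp
      have hlow' : r ≤ ‖z‖ := by
        have hmul : r * ‖z‖⁻¹ ≤ r * (1 / r) := mul_le_mul_of_nonneg_left hchain hr0.le
        rw [hrr] at hmul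
        nlinarith [hzpos.le]
      constructor
      · exact hlow'
      ·         exact le_trans hzT hTnorm

end
end

section
/- Let 0 < r < 1. The kernel k_{A_r}(λ,μ) = (1−r²)/((1−λ·conj(μ))·(1−r²/(λ·conj(μ)))) is positive semi-definite on the annulus A_r: for all finitely many points λ_1,…,λ_n ∈ A_r and scalars w_1,…,w_n ∈ ℂ, the sum ∑_{i,j} k_{A_r}(λ_j, λ_i)·w_i·conj(w_j) is a nonnegative real number. -/
open Complex ComplexConjugate ContinuousLinearMap
open scoped ComplexOrder

noncomputable section

/-- Partial fraction identity for the annulus kernel. -/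
lemma kAnn_partial_fraction (c X : ℂ) (hX : X ≠ 0) (h1 : 1 - X ≠ 0) (h2 : 1 - c / X ≠ 0) :
    (1 - c) / ((1 - X) * (1 - c / X)) = (1 - X)⁻¹ + (c / X) * (1 - c / X)⁻¹ := by
  have h2' : X - c ≠ 0 := by
    intro h
    apply h2
    have hc : c = X := by linear_combination -h
    rw [hc, div_self hX, sub_self]
  have hrw : 1 - c / X = (X - c) / X := by field_simp
  rw [hrw]
  field_simp
  ring

/-- The quadratic form of a rank-one-type kernel is a square. -/
lemma quad_form_eq_normSq (n : ℕ) (u w : Fin n → ℂ) :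
    ∑ i : Fin n, ∑ j : Fin n, (u j * conj (u i)) * (w i * conj (w j))
      = (Complex.normSq (∑ i, conj (u i) * w i) : ℂ) := by
  rw [Complex.normSq_eq_conj_mul_self]
  have hc : (starRingEnd ℂ) (∑ i, conj (u i) * w i) = ∑ j, u j * conj (w j) := by
    rw [map_sum]; simp [map_mul]
  rw [hc, Finset.sum_mul_sum, Finset.sum_comm]
  exact Finset.sum_congr rfl fun i _ => Finset.sum_congr rfl fun j _ => by ring

/-- The kernel `k_{A_r}` is positive semi-definite on the annulus `A_r`. -/
theorem kAnn_posSemidef (r : ℝ) (hr0 : 0 < r) (hr1 : r < 1) :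
    IsPosSemidefOn (annulus r) (kAnn r) := by
  intro n x hx w
  have habs : ∀ i, r < ‖x i‖ ∧ ‖x i‖ < 1 := fun i => hx i
  have hx0 : ∀ i, x i ≠ 0 := by
    intro i h
    have := (habs i).1
    rw [h] at this; simp at this; linarith
  set X : Fin n → Fin n → ℂ := fun i j => x j * conj (x i) with hXdef
  set Y : Fin n → Fin n → ℂ := fun i j => (r : ℂ) ^ 2 / (x j * conj (x i)) with hYdef
  have hX0 : ∀ i j, X i j ≠ 0 := fun i j => by
    simp only [hXdef]
    exact mul_ne_zero (hx0 j) ((map_ne_zero (starRingEnd ℂ)).mpr (hx0 i))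
  have hXlt : ∀ i j, ‖X i j‖ < 1 := by
    intro i j
    simp only [hXdef, norm_mul, RCLike.norm_conj]
    have h1 := (habs j).2
    have h2 := (habs i).2
    have := norm_nonneg (x j)
    nlinarith
  have hYlt : ∀ i j, ‖Y i j‖ < 1 := by
    intro i j
    simp only [hYdef, norm_div, norm_mul, RCLike.norm_conj,
      norm_pow, Complex.norm_real, Real.norm_eq_abs, abs_of_pos hr0]
    have h1 := (habs j).1
    have h2 := (habs i).1
    rw [div_lt_one (mul_pos (hr0.trans h1) (hr0.trans h2))]
    nlinarith
  -- kernel expansion as two geometric series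
  have hker : ∀ i j, kAnn r (x j) (x i) * w i * conj (w j)
      = (∑' m : ℕ, (X i j) ^ m * (w i * conj (w j)))
        + (∑' m : ℕ, (Y i j) ^ (m + 1) * (w i * conj (w j))) := by
    intro i j
    have hgX : (∑' m : ℕ, (X i j) ^ m) = (1 - X i j)⁻¹ :=
      tsum_geometric_of_norm_lt_one (hXlt i j)
    have hgY : (∑' m : ℕ, (Y i j) ^ m) = (1 - Y i j)⁻¹ :=
      tsum_geometric_of_norm_lt_one (hYlt i j)
    rw [tsum_mul_right, tsum_mul_right, hgX]
    have hYsucc : (∑' m : ℕ, (Y i j) ^ (m + 1)) = Y i j * (1 - Y i j)⁻¹ := by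
      have he : (fun m : ℕ => (Y i j) ^ (m + 1)) = fun m : ℕ => Y i j * (Y i j) ^ m := by
        funext m; rw [pow_succ']
      rw [he, tsum_mul_left, hgY]
    rw [hYsucc]
    have h1 : (1 : ℂ) - X i j ≠ 0 := by
      intro h
      have hx1 : X i j = 1 := by linear_combination -h
      have := hXlt i j
      rw [hx1] at this; simp at this
    have h2 : (1 : ℂ) - Y i j ≠ 0 := by
      intro h
      have hy1 : Y i j = 1 := by linear_combination -h
      have := hYlt i j
      rw [hy1] at this; simp at this
    have hkval : kAnn r (x j) (x i) = (1 - X i j)⁻¹ + Y i j * (1 - Y i j)⁻¹ :=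
      kAnn_partial_fraction ((r : ℂ) ^ 2) (X i j) (hX0 i j) h1 h2
    rw [hkval]; ring
  -- summability
  have hsf1 : ∀ i j : Fin n, Summable (fun m : ℕ => (X i j) ^ m * (w i * conj (w j))) :=
    fun i j => (summable_geometric_of_norm_lt_one (hXlt i j)).mul_right _
  have hsf2 : ∀ i j : Fin n, Summable (fun m : ℕ => (Y i j) ^ (m + 1) * (w i * conj (w j))) := by
    intro i j
    have he : (fun m : ℕ => (Y i j) ^ (m + 1) * (w i * conj (w j)))
        = fun m : ℕ => Y i j * (w i * conj (w j)) * (Y i j) ^ m := by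
      funext m; rw [pow_succ']; ring
    rw [he]
    exact (summable_geometric_of_norm_lt_one (hYlt i j)).mul_left _
  -- rewrite the double sum
  rw [show (∑ i, ∑ j, kAnn r (x j) (x i) * w i * conj (w j))
      = (∑ i, ∑ j, ((∑' m : ℕ, (X i j) ^ m * (w i * conj (w j)))
        + (∑' m : ℕ, (Y i j) ^ (m + 1) * (w i * conj (w j))))) from
    Finset.sum_congr rfl fun i _ => Finset.sum_congr rfl fun j _ => hker i j]
  simp only [Finset.sum_add_distrib]
  -- swap sums with tsums
  have hswap1 : (∑ i : Fin n, ∑ j : Fin n, ∑' m : ℕ, (X i j) ^ m * (w i * conj (w j)))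
      = ∑' m : ℕ, ∑ i : Fin n, ∑ j : Fin n, (X i j) ^ m * (w i * conj (w j)) :=
    calc (∑ i : Fin n, ∑ j : Fin n, ∑' m : ℕ, (X i j) ^ m * (w i * conj (w j)))
        = ∑ i : Fin n, ∑' m : ℕ, ∑ j : Fin n, (X i j) ^ m * (w i * conj (w j)) :=
          Finset.sum_congr rfl fun i _ => (Summable.tsum_finsetSum fun j _ => hsf1 i j).symm
      _ = ∑' m : ℕ, ∑ i : Fin n, ∑ j : Fin n, (X i j) ^ m * (w i * conj (w j)) :=
          (Summable.tsum_finsetSum fun i _ => summable_sum fun j _ => hsf1 i j).symm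
  have hswap2 : (∑ i : Fin n, ∑ j : Fin n, ∑' m : ℕ, (Y i j) ^ (m + 1) * (w i * conj (w j)))
      = ∑' m : ℕ, ∑ i : Fin n, ∑ j : Fin n, (Y i j) ^ (m + 1) * (w i * conj (w j)) :=
    calc (∑ i : Fin n, ∑ j : Fin n, ∑' m : ℕ, (Y i j) ^ (m + 1) * (w i * conj (w j)))
        = ∑ i : Fin n, ∑' m : ℕ, ∑ j : Fin n, (Y i j) ^ (m + 1) * (w i * conj (w j)) :=
          Finset.sum_congr rfl fun i _ => (Summable.tsum_finsetSum fun j _ => hsf2 i j).symm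
      _ = ∑' m : ℕ, ∑ i : Fin n, ∑ j : Fin n, (Y i j) ^ (m + 1) * (w i * conj (w j)) :=
          (Summable.tsum_finsetSum fun i _ => summable_sum fun j _ => hsf2 i j).symm
  rw [hswap1, hswap2]
  -- identify each inner double sum with a square
  have hq1 : ∀ m : ℕ, (∑ i : Fin n, ∑ j : Fin n, (X i j) ^ m * (w i * conj (w j)))
      = (Complex.normSq (∑ i, conj ((x i) ^ m) * w i) : ℂ) := by
    intro m
    rw [← quad_form_eq_normSq n (fun i => (x i) ^ m) w]
    exact Finset.sum_congr rfl fun i _ => Finset.sum_congr rfl fun j _ => by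
      simp only [hXdef, mul_pow, map_pow]
  have hq2 : ∀ m : ℕ, (∑ i : Fin n, ∑ j : Fin n, (Y i j) ^ (m + 1) * (w i * conj (w j)))
      = (Complex.normSq (∑ i, conj (((r : ℂ) / x i) ^ (m + 1)) * w i) : ℂ) := by
    intro m
    rw [← quad_form_eq_normSq n (fun i => ((r : ℂ) / x i) ^ (m + 1)) w]
    refine Finset.sum_congr rfl fun i _ => Finset.sum_congr rfl fun j _ => ?_
    have hy : Y i j = ((r : ℂ) / x j) * conj ((r : ℂ) / x i) := by
      simp only [hYdef, map_div₀, Complex.conj_ofReal]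
      field_simp
    rw [hy, mul_pow, ← map_pow]
  simp only [hq1, hq2]
  rw [← Complex.ofReal_tsum, ← Complex.ofReal_tsum]
  rw [← Complex.ofReal_add]
  rw [Complex.zero_le_real]
  have hs1 : Summable (fun m : ℕ => Complex.normSq (∑ i, conj ((x i) ^ m) * w i)) := by
    rw [← Complex.summable_ofReal]
    simp only [← hq1]
    exact summable_sum (fun i _ => summable_sum (fun j _ => hsf1 i j))
  have hs2 : Summable (fun m : ℕ =>
      Complex.normSq (∑ i, conj (((r : ℂ) / x i) ^ (m + 1)) * w i)) := by
    rw [← Complex.summable_ofReal]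
    simp only [← hq2]
    exact summable_sum (fun i _ => summable_sum (fun j _ => hsf2 i j))
  exact add_nonneg (tsum_nonneg fun m => Complex.normSq_nonneg _)
    (tsum_nonneg fun m => Complex.normSq_nonneg _)

end
end

section
/- Let 0 < r < 1 and define b_r : A_r → ℂ² by b_r(λ) = (λ/√(r²+1), r/(√(r²+1)·λ)). Then: (i) for every λ ∈ A_r, |λ|²/(r²+1) + r²/((r²+1)·|λ|²) < 1, i.e. b_r maps A_r into the open unit ball 𝔹_2 = {(z_1,z_2) ∈ ℂ² : |z_1|² + |z_2|² < 1}; and (ii) for all λ, μ ∈ A_r, k_{A_r}(λ,μ) = ((1−r²)/(1+r²)) · 1/(1 − ⟨b_r(λ), b_r(μ)⟩), where ⟨u,v⟩ = u_1·conj(v_1) + u_2·conj(v_2). In particular, ((1+r²)/(1−r²))·k_{A_r} is a normalized complete Pick kernel. -/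
open Complex ComplexConjugate ContinuousLinearMap
open scoped ComplexOrder

noncomputable section

/-- The open unit ball `𝔹₂ ⊆ ℂ²`. -/
def ballC2 : Set (ℂ × ℂ) := {u : ℂ × ℂ | ‖u.1‖ ^ 2 + ‖u.2‖ ^ 2 < 1}

/-- The embedding `b_r(λ) = (λ/√(r²+1), r/(√(r²+1)·λ))`. -/
def bmap (r : ℝ) (l : ℂ) : ℂ × ℂ :=
  (l / (Real.sqrt (r ^ 2 + 1) : ℂ), (r : ℂ) / ((Real.sqrt (r ^ 2 + 1) : ℂ) * l))

/-- The hermitian pairing `⟨u,v⟩ = u₁v̄₁ + u₂v̄₂` on `ℂ²`. -/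
def hermInner (u v : ℂ × ℂ) : ℂ := u.1 * conj v.1 + u.2 * conj v.2

/-- `b_r` maps `A_r` into the open unit ball `𝔹₂` and
`k_{A_r}(λ,μ) = ((1-r²)/(1+r²)) · 1/(1 - ⟨b_r(λ), b_r(μ)⟩)`, so
`((1+r²)/(1-r²))·k_{A_r}` is a normalized complete Pick kernel. -/
theorem kAnn_complete_pick (r : ℝ) (hr0 : 0 < r) (hr1 : r < 1) :
    (∀ l ∈ annulus r,
      ‖l‖ ^ 2 / (r ^ 2 + 1) + r ^ 2 / ((r ^ 2 + 1) * ‖l‖ ^ 2) < 1 ∧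
      bmap r l ∈ ballC2) ∧
    ∀ l ∈ annulus r, ∀ m ∈ annulus r,
      kAnn r l m = (((1 - r ^ 2) / (1 + r ^ 2) : ℝ) : ℂ)
        * (1 / (1 - hermInner (bmap r l) (bmap r m))) := by
  have h2 : (0:ℝ) < r ^ 2 + 1 := by positivity
  have hs0 : (Real.sqrt (r ^ 2 + 1) : ℂ) ≠ 0 := by
    simp [Complex.ofReal_ne_zero, Real.sqrt_ne_zero', h2]
  have hssq : ((Real.sqrt (r ^ 2 + 1) : ℂ)) ^ 2 = (r:ℂ) ^ 2 + 1 := by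
    rw [← Complex.ofReal_pow, Real.sq_sqrt h2.le]; push_cast; ring
  have hr2c : (r:ℂ) ^ 2 + 1 ≠ 0 := by
    rw [← hssq]; exact pow_ne_zero _ hs0
  constructor
  · intro l hl
    obtain ⟨hl1, hl2⟩ := hl
    have habs : 0 < ‖l‖ := lt_trans hr0 hl1
    have key : ‖l‖ ^ 2 / (r ^ 2 + 1) + r ^ 2 / ((r ^ 2 + 1) * ‖l‖ ^ 2) < 1 := by
      rw [div_add_div _ _ (ne_of_gt h2) (by positivity), div_lt_one (by positivity)]
      have h3 : r ^ 2 < ‖l‖ ^ 2 := by nlinarith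
      have h4 : ‖l‖ ^ 2 < 1 := by nlinarith
      nlinarith [mul_pos h2 (mul_pos (sub_pos.2 h4) (sub_pos.2 h3))]
    refine ⟨key, ?_⟩
    have hl0 : l ≠ 0 := by
      intro h; rw [h] at habs; simp at habs
    have : ‖(bmap r l).1‖ ^ 2 + ‖(bmap r l).2‖ ^ 2
        = ‖l‖ ^ 2 / (r ^ 2 + 1) + r ^ 2 / ((r ^ 2 + 1) * ‖l‖ ^ 2) := by
      simp only [bmap, norm_div, norm_mul, Complex.norm_real, Real.norm_eq_abs,
        _root_.abs_of_nonneg (Real.sqrt_nonneg _)]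
      rw [div_pow, div_pow, mul_pow, Real.sq_sqrt h2.le]
      simp [_root_.abs_of_nonneg hr0.le]
    simpa [ballC2, this] using key
  · intro l hl m hm
    obtain ⟨hl1, hl2⟩ := hl
    obtain ⟨hm1, hm2⟩ := hm
    have hl0 : l ≠ 0 := by
      intro h; rw [h] at hl1; simp at hl1; linarith
    have hm0 : m ≠ 0 := by
      intro h; rw [h] at hm1; simp at hm1; linarith
    set z := l * conj m with hz
    have hz0 : z ≠ 0 := mul_ne_zero hl0 (by simpa using hm0)
    have habsz : ‖z‖ = ‖l‖ * ‖m‖ := by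
      rw [hz, norm_mul, Complex.norm_conj]
    have habsz1 : ‖z‖ < 1 := by
      rw [habsz]
      calc ‖l‖ * ‖m‖ < 1 * 1 := by
            apply mul_lt_mul'' hl2 hm2 (norm_nonneg _) (norm_nonneg _)
        _ = 1 := by ring
    have habszr : r ^ 2 < ‖z‖ := by
      rw [habsz]
      calc r ^ 2 = r * r := sq r
        _ < ‖l‖ * ‖m‖ :=
            mul_lt_mul'' hl1 hm1 hr0.le hr0.le
    have h1z : 1 - z ≠ 0 := by
      intro h
      have : z = 1 := by linear_combination -h
      rw [this] at habsz1; simp at habsz1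
    have hzr : z - (r:ℂ) ^ 2 ≠ 0 := by
      intro h
      have hzeq : z = (r:ℂ) ^ 2 := by linear_combination h
      have : ‖z‖ = r ^ 2 := by
        rw [hzeq, ← Complex.ofReal_pow, Complex.norm_real, Real.norm_eq_abs, _root_.abs_of_nonneg (sq_nonneg r)]
      linarith
    have hherm : hermInner (bmap r l) (bmap r m)
        = z / ((r:ℂ) ^ 2 + 1) + (r:ℂ) ^ 2 / (((r:ℂ) ^ 2 + 1) * z) := by
      have hm0' : (conj m : ℂ) ≠ 0 := by simpa using hm0
      simp only [hermInner, bmap, map_div₀, map_mul, Complex.conj_ofReal, hz]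
      rw [← hssq]
      field_simp
    have h1r2 : 1 + (r:ℂ) ^ 2 ≠ 0 := by rw [add_comm]; exact hr2c
    have hherm2 : 1 - hermInner (bmap r l) (bmap r m)
        = (1 - z) * (z - (r:ℂ) ^ 2) / (((r:ℂ) ^ 2 + 1) * z) := by
      rw [hherm]; field_simp; ring
    have hcast : (((1 - r ^ 2) / (1 + r ^ 2) : ℝ) : ℂ) = (1 - (r:ℂ) ^ 2) / (1 + (r:ℂ) ^ 2) := by
      push_cast; ring
    rw [kAnn, ← hz, hherm2, one_div_div, hcast]
    field_simp
    ring


end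
end

section
/- Let 0 < r < 1 and let A be the 2×2 complex matrix A = [[√r, 1−r],[0, √r]]. Then ‖A‖ = 1 and ‖r·A⁻¹‖ = 1 (operator norms on ℂ²), so r²·I ≤ A·A* ≤ I; yet the inequality r²·A⁻¹(A⁻¹)* + A·A* ≤ (r²+1)·I fails: for v = (1, √r) one has ⟨((r²+1)·I − r²·A⁻¹(A⁻¹)* − A·A*)v, v⟩ = r²·(r + 1 − 1/r − (2 − 1/r)²) < 0. -/
open Matrix
open scoped ComplexOrder

set_option maxHeartbeats 1600000

noncomputable section

/-- The matrix `A = [[√r, 1-r],[0, √r]]`. -/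
def Amat (r : ℝ) : Matrix (Fin 2) (Fin 2) ℂ :=
  !![((Real.sqrt r : ℝ) : ℂ), ((1 - r : ℝ) : ℂ); 0, ((Real.sqrt r : ℝ) : ℂ)]

lemma key_ineq (s ε : ℝ) (hs : 0 ≤ s) (hs1 : s ≤ 1)
    (hε : ε = 1 - s^2 ∨ ε = -(1 - s^2)) (z w : ℂ) :
    ‖(s:ℂ)*z + (ε:ℂ)*w‖^2 + ‖(s:ℂ)*w‖^2 ≤ ‖z‖^2 + ‖w‖^2 := by
  obtain ⟨a, b⟩ := z
  obtain ⟨c, d⟩ := w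
  have h1 : (0:ℝ) ≤ 1 - s^2 := by nlinarith
  simp only [Complex.sq_norm, Complex.normSq_apply, Complex.add_re,
    Complex.add_im, Complex.mul_re, Complex.mul_im, Complex.ofReal_re, Complex.ofReal_im]
  rcases hε with h | h <;> subst h <;>
    nlinarith [mul_nonneg h1 (sq_nonneg (a - s*c)), mul_nonneg h1 (sq_nonneg (b - s*d)),
      mul_nonneg h1 (sq_nonneg (a + s*c)), mul_nonneg h1 (sq_nonneg (b + s*d))]

lemma norm_le_one (s ε : ℝ) (hs : 0 ≤ s) (hs1 : s ≤ 1)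
    (hε : ε = 1 - s^2 ∨ ε = -(1 - s^2)) :
    ‖Matrix.toEuclideanCLM (𝕜 := ℂ) !![(s:ℂ), (ε:ℂ); 0, (s:ℂ)]‖ ≤ 1 := by
  apply ContinuousLinearMap.opNorm_le_bound _ zero_le_one
  intro x
  rw [one_mul]
  set M : Matrix (Fin 2) (Fin 2) ℂ := !![(s:ℂ), (ε:ℂ); 0, (s:ℂ)]
  have hx : Matrix.toEuclideanCLM (𝕜 := ℂ) M x =
      (WithLp.equiv 2 _).symm (M *ᵥ (WithLp.equiv 2 _ x)) := by
    rw [← Matrix.toLin'_apply]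
    rfl
  rw [hx, EuclideanSpace.norm_eq, EuclideanSpace.norm_eq]
  apply Real.sqrt_le_sqrt
  have h0 : ((WithLp.equiv 2 _).symm (M *ᵥ (WithLp.equiv 2 _ x)) : EuclideanSpace ℂ (Fin 2)) 0
      = (s:ℂ) * x 0 + (ε:ℂ) * x 1 := by
    simp [M, Matrix.mulVec, dotProduct, Fin.sum_univ_two]
  have h1 : ((WithLp.equiv 2 _).symm (M *ᵥ (WithLp.equiv 2 _ x)) : EuclideanSpace ℂ (Fin 2)) 1
      = (s:ℂ) * x 1 := by
    simp [M, Matrix.mulVec, dotProduct, Fin.sum_univ_two]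
  rw [Fin.sum_univ_two, Fin.sum_univ_two, h0, h1]
  exact key_ineq s ε hs hs1 hε (x 0) (x 1)

lemma norm_ge_one (M : Matrix (Fin 2) (Fin 2) ℂ) (y : Fin 2 → ℂ) (hy : y ≠ 0)
    (h : ∑ i, ‖(M *ᵥ y) i‖^2 = ∑ i, ‖y i‖^2) :
    1 ≤ ‖Matrix.toEuclideanCLM (𝕜 := ℂ) M‖ := by
  set v : EuclideanSpace ℂ (Fin 2) := (WithLp.equiv 2 _).symm y with hv
  have hveq : Matrix.toEuclideanCLM (𝕜 := ℂ) M v = (WithLp.equiv 2 _).symm (M *ᵥ y) := by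
    rw [hv, ← Matrix.toLin'_apply]
    rfl
  have hnorm : ‖Matrix.toEuclideanCLM (𝕜 := ℂ) M v‖ = ‖v‖ := by
    rw [hveq, EuclideanSpace.norm_eq, EuclideanSpace.norm_eq]
    congr 1
  have hv0 : 0 < ‖v‖ := by
    rw [norm_pos_iff]
    intro hcontra
    apply hy
    ext i
    exact congrArg (fun (z : EuclideanSpace ℂ (Fin 2)) => z i) hcontra
  have hle := (Matrix.toEuclideanCLM (𝕜 := ℂ) M).le_opNorm v
  rw [hnorm] at hle
  exact le_of_mul_le_mul_right (by rw [one_mul]; exact hle) hv0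

/-- For `A = [[√r, 1-r],[0, √r]]` one has `‖A‖ = ‖rA⁻¹‖ = 1` (so `r²·I ≤ AA* ≤ I`),
yet `r²A⁻¹(A⁻¹)* + AA* ≤ (r²+1)I` fails: for `v = (1, √r)`,
`⟨((r²+1)I - r²A⁻¹(A⁻¹)* - AA*)v, v⟩ = r²(r + 1 - 1/r - (2 - 1/r)²) < 0`. -/
theorem matrix_counterexample (r : ℝ) (hr0 : 0 < r) (hr1 : r < 1) :
    ‖Matrix.toEuclideanCLM (𝕜 := ℂ) (Amat r)‖ = 1 ∧
    ‖Matrix.toEuclideanCLM (𝕜 := ℂ) ((r : ℂ) • (Amat r)⁻¹)‖ = 1 ∧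
    (Amat r * (Amat r)ᴴ - (r : ℂ) ^ 2 • 1).PosSemidef ∧
    ((1 : Matrix (Fin 2) (Fin 2) ℂ) - Amat r * (Amat r)ᴴ).PosSemidef ∧
    star (![1, ((Real.sqrt r : ℝ) : ℂ)]) ⬝ᵥ
        ((((r : ℂ) ^ 2 + 1) • (1 : Matrix (Fin 2) (Fin 2) ℂ)
            - ((r : ℂ) ^ 2 • ((Amat r)⁻¹ * ((Amat r)⁻¹)ᴴ) + Amat r * (Amat r)ᴴ)) *ᵥ
          ![1, ((Real.sqrt r : ℝ) : ℂ)])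
      = (r : ℂ) ^ 2 * ((r : ℂ) + 1 - 1 / (r : ℂ) - (2 - 1 / (r : ℂ)) ^ 2) ∧
    r ^ 2 * (r + 1 - 1 / r - (2 - 1 / r) ^ 2) < 0 ∧
    ¬ ((((r : ℂ) ^ 2 + 1) • (1 : Matrix (Fin 2) (Fin 2) ℂ)
        - ((r : ℂ) ^ 2 • ((Amat r)⁻¹ * ((Amat r)⁻¹)ᴴ) + Amat r * (Amat r)ᴴ)).PosSemidef) := by
  have hsr0 : (0:ℝ) ≤ Real.sqrt r := Real.sqrt_nonneg r
  have hsr1 : Real.sqrt r ≤ 1 := by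
    rw [show (1:ℝ) = Real.sqrt 1 by simp]
    exact Real.sqrt_le_sqrt hr1.le
  have hss : Real.sqrt r * Real.sqrt r = r := Real.mul_self_sqrt hr0.le
  have hs : ((Real.sqrt r : ℝ) : ℂ) * ((Real.sqrt r : ℝ) : ℂ) = (r:ℂ) := by
    rw [← Complex.ofReal_mul, hss]
  have hs2 : ((Real.sqrt r : ℝ) : ℂ) ^ 2 = (r:ℂ) := by
    rw [← Complex.ofReal_pow, Real.sq_sqrt hr0.le]
  have ht2 : ((Real.sqrt (1-r) : ℝ) : ℂ) ^ 2 = ((1:ℂ)-(r:ℂ)) := by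
    rw [← Complex.ofReal_pow, Real.sq_sqrt (by linarith)]; push_cast; ring
  have hrne : (r:ℂ) ≠ 0 := by exact_mod_cast hr0.ne'
  -- the inverse
  have hinv : (Amat r)⁻¹ = ((r:ℂ)⁻¹) •
      !![((Real.sqrt r : ℝ) : ℂ), (-(1 - r : ℝ) : ℂ); 0, ((Real.sqrt r : ℝ) : ℂ)] := by
    apply Matrix.inv_eq_right_inv
    ext i j
    fin_cases i <;> fin_cases j <;>
      simp [Amat, Matrix.mul_apply, Fin.sum_univ_two] <;>
      field_simp <;> first
      | exact hs
      | exact hs2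
      | ring
  have hM : (((r : ℂ) ^ 2 + 1) • (1 : Matrix (Fin 2) (Fin 2) ℂ)
        - ((r : ℂ) ^ 2 • ((Amat r)⁻¹ * ((Amat r)⁻¹)ᴴ) + Amat r * (Amat r)ᴴ))
      = !![-((1:ℂ)-(r:ℂ))^2, 0; 0, ((1:ℂ)-(r:ℂ))^2] := by
    rw [hinv]
    ext i j
    fin_cases i <;> fin_cases j <;>
      simp [Amat, Matrix.mul_apply, -Matrix.cons_mul, conjTranspose_apply, Fin.sum_univ_two,
        Matrix.one_apply, Complex.conj_ofReal] <;>
      field_simp <;>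
      ring_nf <;> (try simp [Complex.conj_ofReal]) <;> first
      | linear_combination (-2*(r:ℂ)^2)*hs
      | linear_combination ((r:ℂ)^2)*hs
      | linear_combination (-2:ℂ)*hs
  have hlt : r ^ 2 * (r + 1 - 1 / r - (2 - 1 / r) ^ 2) < 0 := by
    have heq : r ^ 2 * (r + 1 - 1 / r - (2 - 1 / r) ^ 2) = (r - 1)^3 := by
      field_simp
      ring
    rw [heq]
    exact Odd.pow_neg (by decide) (by linarith)
  refine ⟨?_, ?_, ?_, ?_, ?_, ?_, ?_⟩
  · -- ‖A‖ = 1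
    apply le_antisymm
    · exact norm_le_one (Real.sqrt r) (1 - r) hsr0 hsr1
        (Or.inl (by rw [Real.sq_sqrt hr0.le]))
    · apply norm_ge_one (Amat r) ![((Real.sqrt r : ℝ) : ℂ), 1]
      · intro hcontra
        have := congrFun hcontra 1
        simp at this
      · have hmv : Amat r *ᵥ ![((Real.sqrt r : ℝ) : ℂ), 1] = ![1, ((Real.sqrt r : ℝ) : ℂ)] := by
          funext i
          fin_cases i <;>
            simp [Amat, Matrix.mulVec, dotProduct, Fin.sum_univ_two] <;>
            linear_combination hs
        rw [hmv]
        simp [Fin.sum_univ_two, Complex.norm_real, abs_of_nonneg hsr0]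
        ring
  · -- ‖rA⁻¹‖ = 1
    have hsmul : (r : ℂ) • (Amat r)⁻¹ =
        !![((Real.sqrt r : ℝ) : ℂ), ((-(1 - r) : ℝ) : ℂ); 0, ((Real.sqrt r : ℝ) : ℂ)] := by
      rw [hinv, smul_smul, mul_inv_cancel₀ hrne, one_smul]
      congr 1
      push_cast
      ring_nf
    rw [hsmul]
    apply le_antisymm
    · exact norm_le_one (Real.sqrt r) (-(1 - r)) hsr0 hsr1
        (Or.inr (by rw [Real.sq_sqrt hr0.le]))
    · apply norm_ge_one _ ![((Real.sqrt r : ℝ) : ℂ), -1]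
      · intro hcontra
        have := congrFun hcontra 1
        simp at this
      · have hmv : (!![((Real.sqrt r : ℝ) : ℂ), ((-(1 - r) : ℝ) : ℂ); 0, ((Real.sqrt r : ℝ) : ℂ)] : Matrix (Fin 2) (Fin 2) ℂ) *ᵥ
            ![((Real.sqrt r : ℝ) : ℂ), -1] = ![1, -((Real.sqrt r : ℝ) : ℂ)] := by
          funext i
          fin_cases i <;>
            simp [Matrix.mulVec, dotProduct, Fin.sum_univ_two] <;>
            push_cast <;> linear_combination hs
        rw [hmv]
        simp [Fin.sum_univ_two, Complex.norm_real, abs_of_nonneg hsr0]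
        ring
  · -- AA* - r² ≥ 0
    have key : Amat r * (Amat r)ᴴ - (r : ℂ) ^ 2 • 1 =
        (!![((Real.sqrt (1-r) : ℝ) : ℂ), ((Real.sqrt (1-r) : ℝ) : ℂ) * ((Real.sqrt r : ℝ) : ℂ)] : Matrix (Fin 1) (Fin 2) ℂ)ᴴ *
        !![((Real.sqrt (1-r) : ℝ) : ℂ), ((Real.sqrt (1-r) : ℝ) : ℂ) * ((Real.sqrt r : ℝ) : ℂ)] := by
      ext i j
      fin_cases i <;> fin_cases j <;>
        simp [Amat, Matrix.mul_apply, -Matrix.cons_mul, conjTranspose_apply, Fin.sum_univ_two,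
          Fin.sum_univ_one] <;>
        ring_nf <;> simp [hs2, ht2] <;> ring
    rw [key]
    exact posSemidef_conjTranspose_mul_self _
  · -- 1 - AA* ≥ 0
    have key : (1 : Matrix (Fin 2) (Fin 2) ℂ) - Amat r * (Amat r)ᴴ =
        (!![-((Real.sqrt (1-r) : ℝ) : ℂ) * ((Real.sqrt r : ℝ) : ℂ), ((Real.sqrt (1-r) : ℝ) : ℂ)] : Matrix (Fin 1) (Fin 2) ℂ)ᴴ *
        !![-((Real.sqrt (1-r) : ℝ) : ℂ) * ((Real.sqrt r : ℝ) : ℂ), ((Real.sqrt (1-r) : ℝ) : ℂ)] := by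
      ext i j
      fin_cases i <;> fin_cases j <;>
        simp [Amat, Matrix.mul_apply, -Matrix.cons_mul, conjTranspose_apply, Fin.sum_univ_two,
          Fin.sum_univ_one] <;>
        ring_nf <;> simp [hs2, ht2] <;> ring
    rw [key]
    exact posSemidef_conjTranspose_mul_self _
  · -- the dot product identity
    rw [hM]
    simp [dotProduct, Matrix.mulVec, Fin.sum_univ_two, Complex.star_def,
      Complex.conj_ofReal]
    field_simp
    linear_combination ((1-(r:ℂ))^2 * (r:ℂ)^3 + (1 - 2*(r:ℂ) + (r:ℂ)^2 - (r:ℂ)^3 + 2*(r:ℂ)^4 - (r:ℂ)^5)) * hs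
  · exact hlt
  · -- not PSD
    intro hPSD
    have h2 := hPSD.dotProduct_mulVec_nonneg ![1, ((Real.sqrt r : ℝ) : ℂ)]
    rw [hM] at h2
    have h3 : star ![1, ((Real.sqrt r : ℝ) : ℂ)] ⬝ᵥ
        ((!![-((1:ℂ)-(r:ℂ))^2, 0; 0, ((1:ℂ)-(r:ℂ))^2] : Matrix (Fin 2) (Fin 2) ℂ) *ᵥ
          ![1, ((Real.sqrt r : ℝ) : ℂ)]) = (((r - 1)^3 : ℝ) : ℂ) := by
      simp [dotProduct, Matrix.mulVec, Fin.sum_univ_two, Complex.star_def,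
        Complex.conj_ofReal]
      push_cast
      linear_combination ((1:ℂ)-(r:ℂ))^2 * hs
    rw [h3] at h2
    rw [Complex.zero_le_real] at h2
    have : (r - 1)^3 < 0 := Odd.pow_neg (by decide) (by linarith)
    linarith

end
end
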